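/- arXiv:1701.00190 — 14 statements merged into one kernel-verified Lean document; each statement's English description precedes it below -/
import Mathlib

section
/- Let A and B be finite sets of positive integers with |A| ≥ 2 and |B| ≥ 2. Then |A∗B| = |A| + |B| - 1 if and only if there exists a rational number r > 1 such that A and B are both geometric progressions with the same common ratio r, i.e., there are positive integers a and b with A = {a·r^i : 0 ≤ i < |A|} and B = {b·r^j : 0 ≤ j < |B|} (each listed element being a positive integer). -/
open Pointwise

open Finset in
lemma mul_lt_mul_nat {a b c d : ℕ} (h1 : a ≤ b) (h2 : c ≤ d) (h3 : a < b ∨ c < d)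
    (hb : 0 < b) (hd : 0 < d) : a * c < b * d := by
  rcases h3 with h3 | h3 <;> nlinarith

open Finset in
set_option maxHeartbeats 1000000 in
lemma chain_key {A B : Finset ℕ} {m' n' : ℕ}
    {f : Fin (m' + 2) → ℕ} {g : Fin (n' + 2) → ℕ}
    (hfmem : ∀ i, f i ∈ A) (hgmem : ∀ i, g i ∈ B)
    (hfmono : StrictMono f) (hgmono : StrictMono g)
    (hfpos : ∀ i, 0 < f i) (hgpos : ∀ i, 0 < g i)
    (h : (A * B).card = m' + n' + 3) {j : ℕ} (hj : j + 1 < n' + 2) :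
    f ⟨0, by omega⟩ * g ⟨j + 1, hj⟩ = f ⟨1, by omega⟩ * g ⟨j, by omega⟩ := by
  have hfle : ∀ (x y : ℕ) (hx : x < m' + 2) (hy : y < m' + 2), x ≤ y →
      f ⟨x, hx⟩ ≤ f ⟨y, hy⟩ := fun x y hx hy hxy => hfmono.monotone hxy
  have hgle : ∀ (x y : ℕ) (hx : x < n' + 2) (hy : y < n' + 2), x ≤ y →
      g ⟨x, hx⟩ ≤ g ⟨y, hy⟩ := fun x y hx hy hxy => hgmono.monotone hxy
  have hflt : ∀ (x y : ℕ) (hx : x < m' + 2) (hy : y < m' + 2), x < y →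
      f ⟨x, hx⟩ < f ⟨y, hy⟩ := fun x y hx hy hxy => hfmono hxy
  have hglt : ∀ (x y : ℕ) (hx : x < n' + 2) (hy : y < n' + 2), x < y →
      g ⟨x, hx⟩ < g ⟨y, hy⟩ := fun x y hx hy hxy => hgmono hxy
  set C : Fin (m' + n' + 3) → ℕ := fun k =>
    if hk : (k : ℕ) < n' + 2 then f ⟨0, by omega⟩ * g ⟨k, hk⟩
    else f ⟨(k : ℕ) - (n' + 1), by have := k.isLt; omega⟩ * g ⟨n' + 1, by omega⟩ with hC
  set D : Fin (m' + n' + 3) → ℕ := fun k =>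
    if hk1 : (k : ℕ) < j + 1 then f ⟨0, by omega⟩ * g ⟨k, by omega⟩
    else if hk2 : (k : ℕ) < n' + 3 then f ⟨1, by omega⟩ * g ⟨(k : ℕ) - 1, by omega⟩
    else f ⟨(k : ℕ) - (n' + 1), by have := k.isLt; omega⟩ * g ⟨n' + 1, by omega⟩ with hD
  have hCmono : StrictMono C := by
    intro k l hkl
    have hkl' : (k : ℕ) < (l : ℕ) := hkl
    have hk2 := k.isLt
    have hl2 := l.isLt
    simp only [hC]
    split_ifs with h1 h2 h2
    · exact mul_lt_mul_nat le_rfl (hgle _ _ _ _ (by omega)) (Or.inr (hglt _ _ _ _ (by omega)))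
        (hfpos _) (hgpos _)
    · exact mul_lt_mul_nat (hfle _ _ _ _ (by omega)) (hgle _ _ _ _ (by omega))
        (Or.inl (hflt _ _ _ _ (by omega))) (hfpos _) (hgpos _)
    · omega
    · exact mul_lt_mul_nat (hfle _ _ _ _ (by omega)) le_rfl
        (Or.inl (hflt _ _ _ _ (by omega))) (hfpos _) (hgpos _)
  have hDmono : StrictMono D := by
    intro k l hkl
    have hkl' : (k : ℕ) < (l : ℕ) := hkl
    have hk2 := k.isLt
    have hl2 := l.isLt
    simp only [hD]
    split_ifs with h1 h2 h3 h3 h4 h5 h5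
    · exact mul_lt_mul_nat le_rfl (hgle _ _ _ _ (by omega)) (Or.inr (hglt _ _ _ _ (by omega)))
        (hfpos _) (hgpos _)
    · exact mul_lt_mul_nat (hfle _ _ _ _ (by omega)) (hgle _ _ _ _ (by omega))
        (Or.inl (hflt _ _ _ _ (by omega))) (hfpos _) (hgpos _)
    · exact mul_lt_mul_nat (hfle _ _ _ _ (by omega)) (hgle _ _ _ _ (by omega))
        (Or.inl (hflt _ _ _ _ (by omega))) (hfpos _) (hgpos _)
    · omega
    · exact mul_lt_mul_nat le_rfl (hgle _ _ _ _ (by omega)) (Or.inr (hglt _ _ _ _ (by omega)))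
        (hfpos _) (hgpos _)
    · exact mul_lt_mul_nat (hfle _ _ _ _ (by omega)) (hgle _ _ _ _ (by omega))
        (Or.inl (hflt _ _ _ _ (by omega))) (hfpos _) (hgpos _)
    · omega
    · omega
    · exact mul_lt_mul_nat (hfle _ _ _ _ (by omega)) le_rfl
        (Or.inl (hflt _ _ _ _ (by omega))) (hfpos _) (hgpos _)
  have hCmem : ∀ k, C k ∈ A * B := by
    intro k
    simp only [hC]
    split_ifs <;> exact mul_mem_mul (hfmem _) (hgmem _)
  have hDmem : ∀ k, D k ∈ A * B := by
    intro k
    simp only [hD]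
    split_ifs <;> exact mul_mem_mul (hfmem _) (hgmem _)
  have hCeq := orderEmbOfFin_unique h hCmem hCmono
  have hDeq := orderEmbOfFin_unique h hDmem hDmono
  have hCD : C = D := hCeq.trans hDeq.symm
  have hthis := congrFun hCD ⟨j + 1, by omega⟩
  simp only [hC, hD] at hthis
  split_ifs at hthis with h1 h2 h3
  all_goals try omega
  all_goals simpa using hthis


/-- For finite sets `A`, `B` of positive integers with `|A| ≥ 2`, `|B| ≥ 2`,
`|A ∗ B| = |A| + |B| - 1` iff `A` and `B` are geometric progressions with the same
common ratio `r ∈ ℚ`, `r > 1` (each listed element `a·r^i`, `b·r^j` being a positive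
integer, which is expressed by equating images in `ℚ`). -/
theorem productSet_card_eq_iff_geomProg (A B : Finset ℕ)
    (hA : 2 ≤ A.card) (hB : 2 ≤ B.card)
    (hApos : ∀ a ∈ A, 0 < a) (hBpos : ∀ b ∈ B, 0 < b) :
    (A * B).card = A.card + B.card - 1 ↔
      ∃ r : ℚ, 1 < r ∧ ∃ a b : ℕ, 0 < a ∧ 0 < b ∧
        A.image (fun x : ℕ => (x : ℚ)) = (Finset.range A.card).image (fun i => (a : ℚ) * r ^ i) ∧
        B.image (fun x : ℕ => (x : ℚ)) = (Finset.range B.card).image (fun j => (b : ℚ) * r ^ j) := by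
  constructor
  · intro h
    obtain ⟨m', hm⟩ : ∃ m', A.card = m' + 2 := ⟨A.card - 2, by omega⟩
    obtain ⟨n', hn⟩ : ∃ n', B.card = n' + 2 := ⟨B.card - 2, by omega⟩
    have h' : (A * B).card = m' + n' + 3 := by omega
    have h'' : (B * A).card = n' + m' + 3 := by rw [mul_comm]; omega
    obtain ⟨f, hfmem, hfmono, hfsurj⟩ :
        ∃ f : Fin (m' + 2) → ℕ, (∀ i, f i ∈ A) ∧ StrictMono f ∧ ∀ x ∈ A, ∃ i, f i = x := by
      refine ⟨A.orderEmbOfFin hm, fun i => A.orderEmbOfFin_mem hm i,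
        (A.orderEmbOfFin hm).strictMono, fun x hx => ⟨(A.orderIsoOfFin hm).symm ⟨x, hx⟩, ?_⟩⟩
      have h2 : (A.orderIsoOfFin hm) ((A.orderIsoOfFin hm).symm ⟨x, hx⟩) = ⟨x, hx⟩ :=
        (A.orderIsoOfFin hm).apply_symm_apply _
      have h3 := Finset.coe_orderIsoOfFin_apply A hm ((A.orderIsoOfFin hm).symm ⟨x, hx⟩)
      rw [h2] at h3
      exact h3.symm
    obtain ⟨g, hgmem, hgmono, hgsurj⟩ :
        ∃ g : Fin (n' + 2) → ℕ, (∀ i, g i ∈ B) ∧ StrictMono g ∧ ∀ x ∈ B, ∃ i, g i = x := by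
      refine ⟨B.orderEmbOfFin hn, fun i => B.orderEmbOfFin_mem hn i,
        (B.orderEmbOfFin hn).strictMono, fun x hx => ⟨(B.orderIsoOfFin hn).symm ⟨x, hx⟩, ?_⟩⟩
      have h2 : (B.orderIsoOfFin hn) ((B.orderIsoOfFin hn).symm ⟨x, hx⟩) = ⟨x, hx⟩ :=
        (B.orderIsoOfFin hn).apply_symm_apply _
      have h3 := Finset.coe_orderIsoOfFin_apply B hn ((B.orderIsoOfFin hn).symm ⟨x, hx⟩)
      rw [h2] at h3
      exact h3.symm
    have hfpos : ∀ i, 0 < f i := fun i => hApos _ (hfmem i)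
    have hgpos : ∀ i, 0 < g i := fun i => hBpos _ (hgmem i)
    have keyB : ∀ j (hj : j + 1 < n' + 2),
        f ⟨0, by omega⟩ * g ⟨j + 1, hj⟩ = f ⟨1, by omega⟩ * g ⟨j, by omega⟩ :=
      fun j hj => chain_key hfmem hgmem hfmono hgmono hfpos hgpos h' hj
    have keyA : ∀ i (hi : i + 1 < m' + 2),
        g ⟨0, by omega⟩ * f ⟨i + 1, hi⟩ = g ⟨1, by omega⟩ * f ⟨i, by omega⟩ :=
      fun i hi => chain_key hgmem hfmem hgmono hfmono hgpos hfpos h'' hi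
    obtain ⟨a0, ha0⟩ : ∃ x, f ⟨0, by omega⟩ = x := ⟨_, rfl⟩
    obtain ⟨a1, ha1⟩ : ∃ x, f ⟨1, by omega⟩ = x := ⟨_, rfl⟩
    obtain ⟨b0, hb0⟩ : ∃ x, g ⟨0, by omega⟩ = x := ⟨_, rfl⟩
    obtain ⟨b1, hb1⟩ : ∃ x, g ⟨1, by omega⟩ = x := ⟨_, rfl⟩
    have ha : 0 < a0 := ha0 ▸ hfpos _
    have hb : 0 < b0 := hb0 ▸ hgpos _
    have haq : ((a0 : ℕ) : ℚ) ≠ 0 := by exact_mod_cast ha.ne'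
    have hbq : ((b0 : ℕ) : ℚ) ≠ 0 := by exact_mod_cast hb.ne'
    have haa1 : a0 < a1 := ha0 ▸ ha1 ▸ hfmono (show (⟨0, by omega⟩ : Fin (m' + 2)) < ⟨1, by omega⟩ by simp)
    obtain ⟨r, hrdef⟩ : ∃ r : ℚ, r = ((a1 : ℕ) : ℚ) / ((a0 : ℕ) : ℚ) := ⟨_, rfl⟩
    have hf0q : (0 : ℚ) < ((a0 : ℕ) : ℚ) := by exact_mod_cast ha
    have hr : 1 < r := by
      rw [hrdef, one_lt_div hf0q]
      exact_mod_cast haa1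
    have hcross : a0 * b1 = a1 * b0 := by
      rw [← ha0, ← ha1, ← hb0, ← hb1]
      exact keyB 0 (by omega)
    have hcrossq : ((a0 : ℕ) : ℚ) * b1 = ((a1 : ℕ) : ℚ) * b0 := by exact_mod_cast hcross
    have hb1b : ((b1 : ℕ) : ℚ) = ((b0 : ℕ) : ℚ) * r := by
      rw [hrdef]
      field_simp
      linear_combination hcrossq
    have hgq : ∀ j (hj : j < n' + 2),
        ((g ⟨j, hj⟩ : ℕ) : ℚ) = ((b0 : ℕ) : ℚ) * r ^ j := by
      intro j
      induction j with
      | zero => intro hj; rw [← hb0]; simp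
      | succ j ih =>
        intro hj
        have hj' : j < n' + 2 := by omega
        have ecn : a0 * g ⟨j + 1, hj⟩ = a1 * g ⟨j, hj'⟩ := by
          rw [← ha0, ← ha1]; exact keyB j hj
        have ec : ((a0 : ℕ) : ℚ) * ((g ⟨j + 1, hj⟩ : ℕ) : ℚ) =
            ((a1 : ℕ) : ℚ) * ((g ⟨j, hj'⟩ : ℕ) : ℚ) := by exact_mod_cast ecn
        rw [pow_succ, ← mul_assoc, ← ih hj', hrdef]
        field_simp
        linear_combination ec
    have hfq : ∀ i (hi : i < m' + 2),
        ((f ⟨i, hi⟩ : ℕ) : ℚ) = ((a0 : ℕ) : ℚ) * r ^ i := by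
      intro i
      induction i with
      | zero => intro hi; rw [← ha0]; simp
      | succ i ih =>
        intro hi
        have hi' : i < m' + 2 := by omega
        have ecn : b0 * f ⟨i + 1, hi⟩ = b1 * f ⟨i, hi'⟩ := by
          rw [← hb0, ← hb1]; exact keyA i hi
        have ec : ((b0 : ℕ) : ℚ) * ((f ⟨i + 1, hi⟩ : ℕ) : ℚ) =
            ((b1 : ℕ) : ℚ) * ((f ⟨i, hi'⟩ : ℕ) : ℚ) := by exact_mod_cast ecn
        have e2 : ((b0 : ℕ) : ℚ) * ((f ⟨i + 1, hi⟩ : ℕ) : ℚ) =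
            ((b0 : ℕ) : ℚ) * (((f ⟨i, hi'⟩ : ℕ) : ℚ) * r) := by
          rw [ec, hb1b]; ring
        have e3 := mul_left_cancel₀ hbq e2
        rw [pow_succ, ← mul_assoc, ← ih hi']
        exact e3
    refine ⟨r, hr, a0, b0, ha, hb, ?_, ?_⟩
    · rw [hm]
      ext q
      simp only [Finset.mem_image, Finset.mem_range]
      constructor
      · rintro ⟨x, hx, rfl⟩
        obtain ⟨i, rfl⟩ := hfsurj x hx
        exact ⟨i, i.isLt, (hfq i.val i.isLt).symm⟩
      · rintro ⟨i, hi, rfl⟩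
        exact ⟨f ⟨i, hi⟩, hfmem _, hfq i hi⟩
    · rw [hn]
      ext q
      simp only [Finset.mem_image, Finset.mem_range]
      constructor
      · rintro ⟨x, hx, rfl⟩
        obtain ⟨i, rfl⟩ := hgsurj x hx
        exact ⟨i, i.isLt, (hgq i.val i.isLt).symm⟩
      · rintro ⟨j, hj, rfl⟩
        exact ⟨g ⟨j, hj⟩, hgmem _, hgq j hj⟩
  · rintro ⟨r, hr, a, b, ha, hb, hAim, hBim⟩
    have hr0 : (0 : ℚ) < r := lt_trans one_pos hr
    have hinj : Function.Injective (fun x : ℕ => (x : ℚ)) := fun x y hxy =>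
      Nat.cast_injective hxy
    have himul : (A * B).image (fun x : ℕ => (x : ℚ)) =
        (A.image (fun x : ℕ => (x : ℚ))) * (B.image (fun x : ℕ => (x : ℚ))) := by
      have := Finset.image_mul (f := Nat.castRingHom ℚ) (s := A) (t := B)
      simpa using this
    have habpos : (0 : ℚ) < (a : ℚ) * (b : ℚ) := by
      have : 0 < a * b := Nat.mul_pos ha hb
      exact_mod_cast this
    have hprod : (A.image (fun x : ℕ => (x : ℚ))) * (B.image (fun x : ℕ => (x : ℚ))) =
        (Finset.range (A.card + B.card - 1)).image (fun k => ((a : ℚ) * (b : ℚ)) * r ^ k) := by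
      rw [hAim, hBim]
      ext q
      simp only [Finset.mem_mul, Finset.mem_image, Finset.mem_range]
      constructor
      · rintro ⟨y, ⟨i, hi, rfl⟩, z, ⟨j, hj, rfl⟩, rfl⟩
        exact ⟨i + j, by omega, by rw [pow_add]; ring⟩
      · rintro ⟨k, hk, rfl⟩
        refine ⟨(a : ℚ) * r ^ (min k (A.card - 1)), ⟨min k (A.card - 1), by omega, rfl⟩,
          (b : ℚ) * r ^ (k - min k (A.card - 1)), ⟨k - min k (A.card - 1), by omega, rfl⟩, ?_⟩
        rw [mul_mul_mul_comm, ← pow_add]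
        congr 2
        omega
    have hmono2 : StrictMono (fun k : ℕ => ((a : ℚ) * (b : ℚ)) * r ^ k) := fun k l hkl =>
      mul_lt_mul_of_pos_left (pow_lt_pow_right₀ hr hkl) habpos
    calc (A * B).card = ((A * B).image (fun x : ℕ => (x : ℚ))).card :=
          (Finset.card_image_of_injective _ hinj).symm
      _ = A.card + B.card - 1 := by
          rw [himul, hprod, Finset.card_image_of_injective _ hmono2.injective,
            Finset.card_range]
end

section
/- Let A and B be nonempty finite sets of positive integers. Then |A∗B| = |A|·|B| if and only if Q_A ∩ Q_B = {1}, i.e., the quotient sets Q_A and Q_B have no common element other than 1. -/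
open Pointwise

/-- The quotient set of a finite set `A` of positive integers:
`Q_A = {a/b ∈ ℚ : a, b ∈ A, a ≥ b}`. -/
def quotientSet (A : Finset ℕ) : Finset ℚ :=
  ((A ×ˢ A).filter (fun p => p.2 ≤ p.1)).image (fun p => (p.1 : ℚ) / (p.2 : ℚ))

lemma mem_quotientSet_of {A : Finset ℕ} {a b : ℕ} (ha : a ∈ A) (hb : b ∈ A)
    (hle : b ≤ a) : ((a : ℚ) / b) ∈ quotientSet A :=
  Finset.mem_image.2 ⟨(a, b), Finset.mem_filter.2 ⟨Finset.mem_product.2 ⟨ha, hb⟩, hle⟩, rfl⟩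

lemma key_lemma {A B : Finset ℕ}
    (hApos : ∀ a ∈ A, 0 < a) (hBpos : ∀ b ∈ B, 0 < b)
    (h : quotientSet A ∩ quotientSet B = {1})
    {a1 a2 b1 b2 : ℕ} (ha1 : a1 ∈ A) (ha2 : a2 ∈ A) (hb1 : b1 ∈ B) (hb2 : b2 ∈ B)
    (hle : a2 ≤ a1) (heq : a1 * b1 = a2 * b2) : a1 = a2 ∧ b1 = b2 := by
  have ha1p := hApos a1 ha1
  have ha2p := hApos a2 ha2
  have hb1p := hBpos b1 hb1
  have hb2p := hBpos b2 hb2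
  have hble : b1 ≤ b2 := by
    by_contra hcon
    push_neg at hcon
    have : a2 * b2 < a1 * b1 := by
      calc a2 * b2 ≤ a1 * b2 := Nat.mul_le_mul_right _ hle
        _ < a1 * b1 := (Nat.mul_lt_mul_left ha1p).mpr hcon
    omega
  have hq : ((a1 : ℚ) / a2) = ((b2 : ℚ) / b1) := by
    rw [div_eq_div_iff (by exact_mod_cast ha2p.ne') (by exact_mod_cast hb1p.ne')]
    exact_mod_cast heq.trans (Nat.mul_comm a2 b2)
  have hmemA : ((a1 : ℚ) / a2) ∈ quotientSet A := mem_quotientSet_of ha1 ha2 hle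
  have hmemB : ((a1 : ℚ) / a2) ∈ quotientSet B := hq ▸ mem_quotientSet_of hb2 hb1 hble
  have h1 : ((a1 : ℚ) / a2) = 1 := by
    have : ((a1 : ℚ) / a2) ∈ ({1} : Finset ℚ) := by
      rw [← h]; exact Finset.mem_inter.2 ⟨hmemA, hmemB⟩
    simpa using this
  have ha : a1 = a2 := by
    have : (a1 : ℚ) = a2 := by
      field_simp at h1; exact_mod_cast h1
    exact_mod_cast this
  refine ⟨ha, ?_⟩
  subst ha
  exact Nat.eq_of_mul_eq_mul_left ha1p heq

/-- For nonempty finite sets `A`, `B` of positive integers,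
`|A ∗ B| = |A|·|B|` iff the quotient sets `Q_A` and `Q_B` intersect exactly in `{1}`. -/
theorem productSet_card_eq_mul_iff (A B : Finset ℕ)
    (hA : A.Nonempty) (hB : B.Nonempty)
    (hApos : ∀ a ∈ A, 0 < a) (hBpos : ∀ b ∈ B, 0 < b) :
    (A * B).card = A.card * B.card ↔ quotientSet A ∩ quotientSet B = {1} := by
  rw [Finset.mul_def, ← Finset.card_product, Finset.card_image_iff]
  constructor
  · intro hinj
    apply Finset.Subset.antisymm
    · intro q hq
      rw [Finset.mem_inter] at hq
      obtain ⟨hqA, hqB⟩ := hq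
      obtain ⟨⟨a1, a2⟩, hpa, hqa⟩ := Finset.mem_image.1 hqA
      obtain ⟨⟨b1, b2⟩, hpb, hqb⟩ := Finset.mem_image.1 hqB
      simp only [Finset.mem_filter, Finset.mem_product] at hpa hpb
      obtain ⟨⟨ha1, ha2⟩, hlea⟩ := hpa
      obtain ⟨⟨hb1, hb2⟩, hleb⟩ := hpb
      have ha2p := hApos a2 ha2
      have hb2p := hBpos b2 hb2
      have heqQ : (a1 : ℚ) / a2 = (b1 : ℚ) / b2 := by rw [hqa, hqb]
      have heqN : a1 * b2 = a2 * b1 := by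
        rw [div_eq_div_iff (by exact_mod_cast ha2p.ne') (by exact_mod_cast hb2p.ne')] at heqQ
        have h' : a1 * b2 = b1 * a2 := by exact_mod_cast heqQ
        exact h'.trans (Nat.mul_comm b1 a2)
      have m1 : ((a1, b2) : ℕ × ℕ) ∈ (↑(A ×ˢ B) : Set (ℕ × ℕ)) :=
        Finset.mem_coe.2 (Finset.mem_product.2 ⟨ha1, hb2⟩)
      have m2 : ((a2, b1) : ℕ × ℕ) ∈ (↑(A ×ˢ B) : Set (ℕ × ℕ)) :=
        Finset.mem_coe.2 (Finset.mem_product.2 ⟨ha2, hb1⟩)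
      have := hinj m1 m2 heqN
      have ha12 : a1 = a2 := congrArg Prod.fst this
      rw [← hqa, ha12]
      simp [div_self (by exact_mod_cast ha2p.ne' : (a2:ℚ) ≠ 0)]
    · intro q hq
      rw [Finset.mem_singleton] at hq
      subst hq
      obtain ⟨a, ha⟩ := hA
      obtain ⟨b, hb⟩ := hB
      refine Finset.mem_inter.2 ⟨?_, ?_⟩
      · have := mem_quotientSet_of ha ha le_rfl
        rwa [div_self (by exact_mod_cast (hApos a ha).ne')] at this
      · have := mem_quotientSet_of hb hb le_rfl
        rwa [div_self (by exact_mod_cast (hBpos b hb).ne')] at this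
  · intro h
    intro p hp q hq hpq
    simp only [Finset.mem_coe, Finset.mem_product] at hp hq
    obtain ⟨hpA, hpB⟩ := hp
    obtain ⟨hqA, hqB⟩ := hq
    rcases le_total q.1 p.1 with hle | hle
    · obtain ⟨h1, h2⟩ := key_lemma hApos hBpos h hpA hqA hpB hqB hle hpq
      exact Prod.ext h1 h2
    · obtain ⟨h1, h2⟩ := key_lemma hApos hBpos h hqA hpA hqB hpB hle hpq.symm
      exact Prod.ext h1.symm h2.symm
end

section
/- Let G be a finite simple graph and f a product set-labeling of G. Then f is a strong product set-labeling (i.e., |f(u)∗f(v)| = |f(u)|·|f(v)| for every edge uv) if and only if for every edge uv of G the quotient sets of the set-labels of u and v intersect exactly in {1}, i.e., Q_{f(u)} ∩ Q_{f(v)} = {1}. (Since 1 lies in every quotient set, this is the precise form of the statement that the quotient sets of adjacent vertex labels are disjoint.) -/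
open Pointwise

lemma mem_quotientSet {A : Finset ℕ} {q : ℚ} :
    q ∈ quotientSet A ↔ ∃ a ∈ A, ∃ b ∈ A, b ≤ a ∧ (a : ℚ) / (b : ℚ) = q := by
  simp only [quotientSet, Finset.mem_image, Finset.mem_filter, Finset.mem_product]
  constructor
  · rintro ⟨⟨a, b⟩, ⟨⟨ha, hb⟩, hle⟩, hq⟩
    exact ⟨a, ha, b, hb, hle, hq⟩
  · rintro ⟨a, ha, b, hb, hle, hq⟩
    exact ⟨(a, b), ⟨⟨ha, hb⟩, hle⟩, hq⟩

lemma key {A B : Finset ℕ} (hA : A.Nonempty) (hB : B.Nonempty)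
    (hAp : ∀ x ∈ A, 0 < x) (hBp : ∀ x ∈ B, 0 < x) :
    (A * B).card = A.card * B.card ↔ quotientSet A ∩ quotientSet B = {1} := by
  rw [Finset.mul_def, ← Finset.card_product, Finset.card_image_iff]
  constructor
  · intro hinj
    obtain ⟨a0, ha0⟩ := hA
    obtain ⟨b0, hb0⟩ := hB
    apply Finset.eq_singleton_iff_unique_mem.mpr
    constructor
    · rw [Finset.mem_inter]
      constructor
      · exact mem_quotientSet.mpr ⟨a0, ha0, a0, ha0, le_rfl,
          div_self (by exact_mod_cast (hAp a0 ha0).ne')⟩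
      · exact mem_quotientSet.mpr ⟨b0, hb0, b0, hb0, le_rfl,
          div_self (by exact_mod_cast (hBp b0 hb0).ne')⟩
    · intro q hq
      rw [Finset.mem_inter] at hq
      obtain ⟨a1, ha1, a2, ha2, hale, haq⟩ := mem_quotientSet.mp hq.1
      obtain ⟨b1, hb1, b2, hb2, hble, hbq⟩ := mem_quotientSet.mp hq.2
      have ha2p : (0 : ℚ) < a2 := by exact_mod_cast hAp a2 ha2
      have hb2p : (0 : ℚ) < b2 := by exact_mod_cast hBp b2 hb2
      have heq : (a1 : ℚ) / a2 = (b1 : ℚ) / b2 := haq.trans hbq.symm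
      rw [div_eq_div_iff ha2p.ne' hb2p.ne'] at heq
      have heqn : a1 * b2 = a2 * b1 := by
        rw [mul_comm a2]; exact_mod_cast heq
      have hm1 : ((a1, b2) : ℕ × ℕ) ∈ (↑(A ×ˢ B) : Set (ℕ × ℕ)) :=
        Finset.mem_coe.mpr (Finset.mem_product.mpr ⟨ha1, hb2⟩)
      have hm2 : ((a2, b1) : ℕ × ℕ) ∈ (↑(A ×ˢ B) : Set (ℕ × ℕ)) :=
        Finset.mem_coe.mpr (Finset.mem_product.mpr ⟨ha2, hb1⟩)
      have := hinj hm1 hm2 heqn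
      have ha12 : a1 = a2 := (Prod.ext_iff.mp this).1
      rw [← haq, ha12, div_self ha2p.ne']
  · intro hQ
    intro p hp p' hp' hmul
    rw [Finset.mem_coe, Finset.mem_product] at hp hp'
    obtain ⟨a, b⟩ := p
    obtain ⟨a', b'⟩ := p'
    obtain ⟨ha, hb⟩ := hp
    obtain ⟨ha', hb'⟩ := hp'
    simp only at hmul ⊢
    -- hmul : a * b = a' * b'
    have main : ∀ (x y : ℕ) (z w : ℕ), x ∈ A → y ∈ A → z ∈ B → w ∈ B →
        x * z = y * w → x < y → False := by
      intro x y z w hx hy hz hw hxy hlt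
      have hwpos := hBp w hw
      have hzw : w < z := by
        have h1 : x * w < y * w := (Nat.mul_lt_mul_right hwpos).mpr hlt
        rw [← hxy] at h1
        exact Nat.lt_of_mul_lt_mul_left h1
      have hxp : (0 : ℚ) < x := by exact_mod_cast hAp x hx
      have hwp : (0 : ℚ) < w := by exact_mod_cast hwpos
      have hq : (y : ℚ) / x = (z : ℚ) / w := by
        rw [div_eq_div_iff hxp.ne' hwp.ne']
        have hc : (x : ℚ) * z = (y : ℚ) * w := by exact_mod_cast hxy
        linear_combination -hc
      have hmemA : (y : ℚ) / x ∈ quotientSet A :=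
        mem_quotientSet.mpr ⟨y, hy, x, hx, hlt.le, rfl⟩
      have hmemB : (y : ℚ) / x ∈ quotientSet B :=
        mem_quotientSet.mpr ⟨z, hz, w, hw, hzw.le, hq.symm⟩
      have : (y : ℚ) / x = 1 := by
        have := hQ ▸ Finset.mem_inter.mpr ⟨hmemA, hmemB⟩
        simpa using this
      rw [div_eq_one_iff_eq hxp.ne'] at this
      have : y = x := by exact_mod_cast this
      omega
    rcases lt_trichotomy a a' with hlt | heq | hgt
    · exact absurd (main a a' b b' ha ha' hb hb' hmul hlt) (by simp)
    · subst heq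
      have : b = b' := Nat.eq_of_mul_eq_mul_left (hAp a ha) hmul
      simp [this]
    · exact absurd (main a' a b' b ha' ha hb' hb hmul.symm hgt) (by simp)

/-- A product set-labeling `f` of a finite simple graph `G`
(injective, with nonempty labels consisting of positive integers) is strong,
i.e. `|f(u) ∗ f(v)| = |f(u)|·|f(v)|` for every edge `uv`, iff for every edge `uv`
the quotient sets of the labels of `u` and `v` intersect exactly in `{1}`. -/
theorem strong_productSetLabeling_iff_quotientSets {V : Type*} [Fintype V]
    (G : SimpleGraph V) (f : V → Finset ℕ)
    (hinj : Function.Injective f)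
    (hne : ∀ v, (f v).Nonempty)
    (hpos : ∀ v, ∀ x ∈ f v, 0 < x) :
    (∀ u v, G.Adj u v → (f u * f v).card = (f u).card * (f v).card) ↔
      (∀ u v, G.Adj u v → quotientSet (f u) ∩ quotientSet (f v) = {1}) := by
  constructor
  · intro h u v huv
    exact (key (hne u) (hne v) (hpos u) (hpos v)).mp (h u v huv)
  · intro h u v huv
    exact (key (hne u) (hne v) (hpos u) (hpos v)).mpr (h u v huv)
end

section
/- Let a, b, r, s, m, n be positive integers with r ≥ 2, s ≥ 2, r ≤ s, m ≥ 2 and n ≥ 2, and set A = {a·r^i : 0 ≤ i < m} and B = {b·s^j : 0 ≤ j < n}. Then the product set A∗B is a geometric progression if and only if s = r^k for some positive integer k with k ≤ m. -/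
open Pointwise

/-- A finite set of positive integers is a geometric progression (with integer first term
`a > 0` and integer common ratio `r ≥ 2`). -/
def IsGeomProg (A : Finset ℕ) : Prop :=
  ∃ a r : ℕ, 0 < a ∧ 2 ≤ r ∧ A = (Finset.range A.card).image (fun i => a * r ^ i)

/-- For positive integers `a, b, r, s, m, n` with `r, s ≥ 2`, `r ≤ s`,
`m, n ≥ 2`, setting `A = {a·r^i : 0 ≤ i < m}` and `B = {b·s^j : 0 ≤ j < n}`, the product
set `A ∗ B` is a geometric progression iff `s = r^k` for some positive integer `k ≤ m`. -/
theorem productSet_isGeomProg_iff (a b r s m n : ℕ)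
    (ha : 0 < a) (hb : 0 < b) (hr : 2 ≤ r) (hs : 2 ≤ s) (hrs : r ≤ s)
    (hm : 2 ≤ m) (hn : 2 ≤ n) :
    IsGeomProg (((Finset.range m).image (fun i => a * r ^ i)) *
        ((Finset.range n).image (fun j => b * s ^ j))) ↔
      ∃ k : ℕ, 0 < k ∧ k ≤ m ∧ s = r ^ k := by
  have hab : 0 < a * b := Nat.mul_pos ha hb
  set A := (Finset.range m).image (fun i => a * r ^ i) with hA
  set B := (Finset.range n).image (fun j => b * s ^ j) with hB
  have hmem : ∀ x, x ∈ A * B ↔ ∃ i < m, ∃ j < n, x = a * b * (r ^ i * s ^ j) := by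
    intro x
    simp only [hA, hB, Finset.mem_mul, Finset.mem_image, Finset.mem_range]
    constructor
    · rintro ⟨y, ⟨i, hi, rfl⟩, z, ⟨j, hj, rfl⟩, rfl⟩
      exact ⟨i, hi, j, hj, by ring⟩
    · rintro ⟨i, hi, j, hj, rfl⟩
      exact ⟨a * r ^ i, ⟨i, hi, rfl⟩, b * s ^ j, ⟨j, hj, rfl⟩, by ring⟩
  constructor
  · rintro ⟨c, q, hc, hq, hEq⟩
    set N := (A * B).card with hN
    have hmem2 : ∀ x, x ∈ A * B ↔ ∃ t < N, x = c * q ^ t := by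
      intro x
      conv_lhs => rw [hEq]
      simp only [Finset.mem_image, Finset.mem_range]
      constructor
      · rintro ⟨t, ht, rfl⟩; exact ⟨t, ht, rfl⟩
      · rintro ⟨t, ht, rfl⟩; exact ⟨t, ht, rfl⟩
    have habmem : a * b ∈ A * B := (hmem _).2 ⟨0, by omega, 0, by omega, by ring⟩
    have habrmem : a * b * r ∈ A * B := (hmem _).2 ⟨1, by omega, 0, by omega, by ring⟩
    -- c = a * b
    have hNpos : 0 < N := Finset.card_pos.2 ⟨_, habmem⟩
    have hcmem : c ∈ A * B := (hmem2 _).2 ⟨0, hNpos, by ring⟩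
    have hcab : c = a * b := by
      obtain ⟨i, hi, j, hj, hx⟩ := (hmem _).1 hcmem
      obtain ⟨t, ht, hx2⟩ := (hmem2 _).1 habmem
      have h1 : a * b ≤ c := by
        rw [hx]
        have : 1 ≤ r ^ i * s ^ j := Nat.one_le_iff_ne_zero.2 (by positivity)
        nlinarith
      have h2 : c ≤ a * b := by
        rw [hx2]
        have : 1 ≤ q ^ t := Nat.one_le_iff_ne_zero.2 (by positivity)
        nlinarith
      omega
    subst hcab
    -- q = r
    have hN2 : 2 ≤ N := by
      have : a * b < a * b * r := by nlinarith
      exact Finset.one_lt_card.2 ⟨_, habmem, _, habrmem, by omega⟩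
    have hqr : q = r := by
      obtain ⟨t, ht, hx⟩ := (hmem2 _).1 habrmem
      have hrq : r = q ^ t := Nat.eq_of_mul_eq_mul_left hab hx
      have ht1 : 1 ≤ t := by
        rcases Nat.eq_zero_or_pos t with h | h
        · subst h; simp at hrq; omega
        · exact h
      have hqler : q ≤ r := hrq ▸ Nat.le_self_pow (by omega) q
      have habq : a * b * q ∈ A * B := (hmem2 _).2 ⟨1, by omega, by ring⟩
      obtain ⟨i, hi, j, hj, hx2⟩ := (hmem _).1 habq
      have hq2 : q = r ^ i * s ^ j := Nat.eq_of_mul_eq_mul_left hab hx2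
      have hrleq : r ≤ q := by
        rw [hq2]
        rcases Nat.eq_zero_or_pos i with hi0 | hi0
        · subst hi0
          rcases Nat.eq_zero_or_pos j with hj0 | hj0
          · subst hj0; simp at hq2; omega
          · calc r ≤ s := hrs
              _ ≤ s ^ j := Nat.le_self_pow (by omega) s
              _ = r ^ 0 * s ^ j := by ring
        · calc r ≤ r ^ i := Nat.le_self_pow (by omega) r
            _ ≤ r ^ i * s ^ j := Nat.le_mul_of_pos_right _ (by positivity)
      omega
    rw [hqr] at hmem2
    -- s = r ^ k
    have habs : a * b * s ∈ A * B := (hmem _).2 ⟨0, by omega, 1, by omega, by ring⟩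
    obtain ⟨k, hk, hx⟩ := (hmem2 _).1 habs
    have hsk : s = r ^ k := Nat.eq_of_mul_eq_mul_left hab hx
    have hk1 : 1 ≤ k := by
      rcases Nat.eq_zero_or_pos k with h | h
      · subst h; simp at hsk; omega
      · exact h
    refine ⟨k, hk1, ?_, hsk⟩
    -- k ≤ m
    by_contra hcon
    push_neg at hcon
    have habrs : a * b * r ^ (k + 1) ∈ A * B := by
      refine (hmem _).2 ⟨1, by omega, 1, by omega, ?_⟩
      rw [hsk]; ring
    obtain ⟨t, ht, hx2⟩ := (hmem2 _).1 habrs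
    have : r ^ (k + 1) = r ^ t := Nat.eq_of_mul_eq_mul_left hab hx2
    have htk : t = k + 1 := (Nat.pow_right_injective hr this.symm)
    have hmN : m < N := by omega
    have hrm : a * b * r ^ m ∈ A * B := (hmem2 _).2 ⟨m, hmN, rfl⟩
    obtain ⟨i, hi, j, hj, hx3⟩ := (hmem _).1 hrm
    rw [hsk, ← pow_mul, ← pow_add] at hx3
    have hm2 : m = i + k * j := Nat.pow_right_injective hr
      (Nat.eq_of_mul_eq_mul_left hab hx3)
    rcases Nat.eq_zero_or_pos j with hj0 | hj0
    · subst hj0; simp at hm2; omega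
    · have : k ≤ k * j := Nat.le_mul_of_pos_right _ hj0
      omega
  · rintro ⟨k, hk, hkm, hsk⟩
    subst hsk
    have hSet : A * B = (Finset.range (m + k * (n - 1))).image (fun t => a * b * r ^ t) := by
      ext x
      rw [hmem]
      simp only [Finset.mem_image, Finset.mem_range]
      constructor
      · rintro ⟨i, hi, j, hj, rfl⟩
        refine ⟨i + k * j, ?_, by rw [pow_add, pow_mul]⟩
        have : k * j ≤ k * (n - 1) := Nat.mul_le_mul_left k (by omega)
        omega
      · rintro ⟨t, ht, rfl⟩
        rcases le_total (t / k) (n - 1) with h | h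
        · refine ⟨t % k, by have := Nat.mod_lt t hk; omega, t / k, by omega, ?_⟩
          rw [← pow_mul, ← pow_add, Nat.mod_add_div]
        · have h3 : k * (n - 1) ≤ t := by
            calc k * (n - 1) ≤ k * (t / k) := Nat.mul_le_mul_left k h
              _ ≤ t := Nat.mul_div_le t k
          refine ⟨t - k * (n - 1), by omega, n - 1, by omega, ?_⟩
          rw [← pow_mul, ← pow_add, Nat.sub_add_cancel h3]
    have hinj : Function.Injective (fun t => a * b * r ^ t) := by
      have : StrictMono (fun t => a * b * r ^ t) := fun x y hxy =>
        (Nat.mul_lt_mul_left hab).2 (Nat.pow_lt_pow_right (by omega) hxy)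
      exact this.injective
    have hcard : (A * B).card = m + k * (n - 1) := by
      rw [hSet, Finset.card_image_of_injective _ hinj, Finset.card_range]
    exact ⟨a * b, r, hab, hr, by rw [hcard]; exact hSet⟩
end

section
/- Let G be a finite simple graph and f a product set-labeling of G such that every vertex label f(v) is a geometric progression with some integer common ratio r_v ≥ 2 and |f(v)| ≥ 2. Then f is a geometric product set-labeling of G (i.e., every edge label f(u)∗f(v) is also a geometric progression) if and only if for every edge uv of G, writing the endpoints so that r_u ≤ r_v, there exists a positive integer k with k ≤ |f(u)| and r_v = r_u^k. -/
open Pointwise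

lemma gp_inj (a r : ℕ) (ha : 0 < a) (hr : 2 ≤ r) :
    Function.Injective (fun e => a * r ^ e) :=
  fun _ _ h => Nat.pow_right_injective hr (Nat.eq_of_mul_eq_mul_left ha h)

lemma mem_prod_iff (a b r s m n x : ℕ) :
    x ∈ ((Finset.range m).image (fun i => a * r ^ i)) *
        ((Finset.range n).image (fun j => b * s ^ j)) ↔
    ∃ i < m, ∃ j < n, a * b * (r ^ i * s ^ j) = x := by
  simp only [Finset.mem_mul, Finset.mem_image, Finset.mem_range]
  constructor
  · rintro ⟨y, ⟨i, hi, rfl⟩, z, ⟨j, hj, rfl⟩, rfl⟩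
    exact ⟨i, hi, j, hj, by ring⟩
  · rintro ⟨i, hi, j, hj, rfl⟩
    exact ⟨_, ⟨i, hi, rfl⟩, _, ⟨j, hj, rfl⟩, by ring⟩

/-- Sufficiency: product of GP(a,r,m) and GP(b,r^k,n) is a GP when 1 ≤ k ≤ m. -/
lemma prod_isGeomProg (a b r m n k : ℕ) (ha : 0 < a) (hb : 0 < b) (hr : 2 ≤ r)
    (hm : 2 ≤ m) (hn : 2 ≤ n) (hk : 1 ≤ k) (hkm : k ≤ m) :
    IsGeomProg (((Finset.range m).image (fun i => a * r ^ i)) *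
      ((Finset.range n).image (fun j => b * (r ^ k) ^ j))) := by
  set N : ℕ := m + k * (n - 1) with hN
  have hab : 0 < a * b := Nat.mul_pos ha hb
  have key : ((Finset.range m).image (fun i => a * r ^ i)) *
      ((Finset.range n).image (fun j => b * (r ^ k) ^ j)) =
      (Finset.range N).image (fun e => a * b * r ^ e) := by
    ext x
    rw [mem_prod_iff]
    simp only [Finset.mem_image, Finset.mem_range]
    constructor
    · rintro ⟨i, hi, j, hj, rfl⟩
      refine ⟨i + k * j, ?_, by rw [← pow_mul, ← pow_add]⟩
      have : k * j ≤ k * (n - 1) := Nat.mul_le_mul_left k (by omega)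
      omega
    · rintro ⟨e, he, rfl⟩
      by_cases hcase : e / k ≤ n - 1
      · have hmod : e % k < k := Nat.mod_lt e (by omega)
        have hdm := Nat.mod_add_div e k
        refine ⟨e % k, by omega, e / k, by omega, ?_⟩
        rw [← pow_mul, ← pow_add]
        have hee : e % k + k * (e / k) = e := by omega
        rw [hee]
      · have h1 : k * (n - 1) ≤ k * (e / k) := Nat.mul_le_mul_left k (by omega)
        have h2 : k * (e / k) ≤ e := Nat.mul_div_le e k
        refine ⟨e - k * (n - 1), by omega, n - 1, by omega, ?_⟩
        rw [← pow_mul, ← pow_add]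
        have hee : e - k * (n - 1) + k * (n - 1) = e := by omega
        rw [hee]
  refine ⟨a * b, r, hab, hr, ?_⟩
  rw [key, Finset.card_image_of_injective _ (gp_inj _ _ hab hr), Finset.card_range]

/-- Necessity: if the product of GP(a,r,m) and GP(b,s,n) with r ≤ s is a GP,
then s = r^k for some 1 ≤ k ≤ m. -/
lemma prod_gp_necessary (a b r s m n : ℕ) (ha : 0 < a) (hb : 0 < b)
    (hr : 2 ≤ r) (hs2 : 2 ≤ s) (hrs : r ≤ s) (hm : 2 ≤ m) (hn : 2 ≤ n)
    (H : IsGeomProg (((Finset.range m).image (fun i => a * r ^ i)) *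
      ((Finset.range n).image (fun j => b * s ^ j)))) :
    ∃ k : ℕ, 0 < k ∧ k ≤ m ∧ s = r ^ k := by
  obtain ⟨A, R, hA, hR, hPeq⟩ := H
  set P := ((Finset.range m).image (fun i => a * r ^ i)) *
      ((Finset.range n).image (fun j => b * s ^ j)) with hPdef
  have hab : 0 < a * b := Nat.mul_pos ha hb
  have memP : ∀ x, x ∈ P ↔ ∃ i < m, ∃ j < n, a * b * (r ^ i * s ^ j) = x :=
    fun x => mem_prod_iff a b r s m n x
  have memP' : ∀ x, x ∈ P ↔ ∃ e < P.card, A * R ^ e = x := by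
    intro x
    conv_lhs => rw [hPeq]
    simp [Finset.mem_image, Finset.mem_range]
  -- `a*b ∈ P` and `a*b*r ∈ P`
  have hab_mem : a * b ∈ P := (memP _).2 ⟨0, by omega, 0, by omega, by ring⟩
  have habr_mem : a * b * r ∈ P := (memP _).2 ⟨1, hm, 0, by omega, by ring⟩
  have habs_mem : a * b * s ∈ P := (memP _).2 ⟨0, by omega, 1, hn, by ring⟩
  -- every element of P is ≥ a*b, and A = a*b
  have hge : ∀ x ∈ P, a * b ≤ x := by
    intro x hx
    obtain ⟨i, _, j, _, rfl⟩ := (memP x).1 hx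
    have : 1 ≤ r ^ i * s ^ j := Nat.one_le_iff_ne_zero.2 (by positivity)
    nlinarith
  have hcard_pos : 0 < P.card := Finset.card_pos.2 ⟨_, hab_mem⟩
  have hA_mem : A ∈ P := (memP' _).2 ⟨0, hcard_pos, by ring⟩
  have hA_eq : A = a * b := by
    have h1 : a * b ≤ A := hge _ hA_mem
    obtain ⟨e, _, he⟩ := (memP' _).1 hab_mem
    have h2 : A ≤ a * b := by
      have : A * 1 ≤ A * R ^ e := Nat.mul_le_mul_left A (Nat.one_le_two_pow.trans
        (Nat.pow_le_pow_left (by omega) e))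
      omega
    omega
  subst hA_eq
  -- P has at least 2 elements
  have hcard2 : 2 ≤ P.card := Finset.one_lt_card.2 ⟨a * b, hab_mem, a * b * r, habr_mem,
    by nlinarith⟩
  -- R = r
  have hR_eq : R = r := by
    -- R ≥ r : a*b*R ∈ P
    have habR_mem : a * b * R ∈ P := (memP' _).2 ⟨1, hcard2, by ring⟩
    obtain ⟨i, _, j, _, hij⟩ := (memP _).1 habR_mem
    have hRij : r ^ i * s ^ j = R := Nat.eq_of_mul_eq_mul_left hab hij
    have hRr : r ≤ R := by
      rcases Nat.eq_zero_or_pos i with hi0 | hi1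
      · rcases Nat.eq_zero_or_pos j with hj0 | hj1
        · subst hi0; subst hj0; simp at hRij; omega
        · have h1 : s ≤ s ^ j := Nat.le_self_pow (by omega) s
          have h2 : s ^ j ≤ r ^ i * s ^ j := Nat.le_mul_of_pos_left _ (by positivity)
          omega
      · have h1 : r ≤ r ^ i := Nat.le_self_pow (by omega) r
        have h2 : r ^ i ≤ r ^ i * s ^ j := Nat.le_mul_of_pos_right _ (by positivity)
        omega
    -- R ≤ r : a*b*r = a*b*R^e
    obtain ⟨e, _, he⟩ := (memP' _).1 habr_mem
    have her : R ^ e = r := Nat.eq_of_mul_eq_mul_left hab he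
    rcases Nat.eq_zero_or_pos e with he0 | he1
    · subst he0; simp at her; omega
    · have : R ≤ R ^ e := Nat.le_self_pow (by omega) R
      omega
  rw [hR_eq] at memP'
  -- s = r ^ k
  obtain ⟨k, _, hk⟩ := (memP' _).1 habs_mem
  have hsk : r ^ k = s := Nat.eq_of_mul_eq_mul_left hab hk
  have hk1 : 0 < k := by
    rcases Nat.eq_zero_or_pos k with h0 | h1
    · subst h0; simp at hsk; omega
    · exact h1
  refine ⟨k, hk1, ?_, hsk.symm⟩
  -- k ≤ m
  by_contra hkm
  push_neg at hkm
  -- top element gives m + ... ≤ card bound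
  have htop_mem : a * b * r ^ ((m - 1) + k * (n - 1)) ∈ P := by
    refine (memP _).2 ⟨m - 1, by omega, n - 1, by omega, ?_⟩
    rw [← hsk, ← pow_mul, ← pow_add]
  obtain ⟨e, heC, he⟩ := (memP' _).1 htop_mem
  have hee : e = (m - 1) + k * (n - 1) :=
    Nat.pow_right_injective hr (Nat.eq_of_mul_eq_mul_left hab he)
  have hkn : k ≤ k * (n - 1) := Nat.le_mul_of_pos_right k (by omega)
  have hmC : m < P.card := by omega
  -- so a*b*r^m ∈ P
  have hm_mem : a * b * r ^ m ∈ P := (memP' _).2 ⟨m, hmC, rfl⟩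
  obtain ⟨i, hi, j, hj, hij⟩ := (memP _).1 hm_mem
  have : r ^ (i + k * j) = r ^ m := by
    rw [pow_add, pow_mul, hsk]
    exact Nat.eq_of_mul_eq_mul_left hab hij
  have hexp : i + k * j = m := Nat.pow_right_injective hr this
  rcases Nat.eq_zero_or_pos j with hj0 | hj1
  · subst hj0; simp at hexp; omega
  · have : k ≤ k * j := Nat.le_mul_of_pos_right k hj1
    omega

/-- Let `f` be a product set-labeling (injective, nonempty labels of
positive integers) of a finite simple graph `G` such that every vertex label `f v` is a
geometric progression with integer common ratio `rv v ≥ 2` and `|f v| ≥ 2`. Then `f` is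
geometric (every edge label is a geometric progression) iff for every edge `uv`, written
so that `rv u ≤ rv v`, there is a positive integer `k ≤ |f u|` with `rv v = (rv u)^k`. -/
theorem geometric_productSetLabeling_iff {V : Type*} [Fintype V]
    (G : SimpleGraph V) (f : V → Finset ℕ) (rv : V → ℕ) (av : V → ℕ)
    (hinj : Function.Injective f)
    (hr : ∀ v, 2 ≤ rv v) (ha : ∀ v, 0 < av v) (hcard : ∀ v, 2 ≤ (f v).card)
    (hgp : ∀ v, f v = (Finset.range (f v).card).image (fun i => av v * (rv v) ^ i)) :
    (∀ u v, G.Adj u v → IsGeomProg (f u * f v)) ↔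
      (∀ u v, G.Adj u v → rv u ≤ rv v →
        ∃ k : ℕ, 0 < k ∧ k ≤ (f u).card ∧ rv v = (rv u) ^ k) := by
  constructor
  · intro h u v hadj hle
    have H := h u v hadj
    rw [hgp u, hgp v] at H
    exact prod_gp_necessary (av u) (av v) (rv u) (rv v) _ _ (ha u) (ha v)
      (hr u) (hr v) hle (hcard u) (hcard v) H
  · intro h u v hadj
    rcases le_or_gt (rv u) (rv v) with hle | hlt
    · obtain ⟨k, hk1, hk2, hk3⟩ := h u v hadj hle
      rw [hgp u, hgp v, hk3]
      exact prod_isGeomProg (av u) (av v) (rv u) _ _ k (ha u) (ha v) (hr u)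
        (hcard u) (hcard v) hk1 hk2
    · obtain ⟨k, hk1, hk2, hk3⟩ := h v u hadj.symm hlt.le
      rw [mul_comm, hgp u, hgp v, hk3]
      exact prod_isGeomProg (av v) (av u) (rv v) _ _ k (ha v) (ha u) (hr v)
        (hcard v) (hcard u) hk1 hk2
end

section
/- Let f be a product set-labeling of the complete graph K_n (n ≥ 2) such that every vertex label f(v) is a geometric progression with some integer common ratio r_v ≥ 2 and |f(v)| ≥ 2. Then f is a geometric product set-labeling of K_n if and only if for every pair of distinct vertices u and v, writing them so that r_u ≤ r_v, there exists a positive integer k with k ≤ |f(u)| and r_v = r_u^k (i.e., the common ratio of every vertex is an integral power, with admissible exponent, or an integral root of the common ratio of every other vertex). -/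
open Pointwise

lemma gp_strictMono (a r : ℕ) (ha : 0 < a) (hr : 2 ≤ r) :
    StrictMono (fun i => a * r ^ i) := fun i j hij =>
  (Nat.mul_lt_mul_left ha).2 (Nat.pow_lt_pow_right hr hij)

lemma gp_card (a r N : ℕ) (ha : 0 < a) (hr : 2 ≤ r) :
    ((Finset.range N).image (fun i => a * r ^ i)).card = N := by
  rw [Finset.card_image_of_injective _ (gp_strictMono a r ha hr).injective, Finset.card_range]

/-- Backward key lemma: if `s = r^k` with `1 ≤ k ≤ m`, the product set is a GP. -/
lemma prod_gp_of_pow (a b r m p k : ℕ) (ha : 0 < a) (hb : 0 < b) (hr : 2 ≤ r)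
    (hm : 2 ≤ m) (hp : 2 ≤ p) (hk1 : 1 ≤ k) (hkm : k ≤ m) :
    IsGeomProg ((Finset.range m).image (fun i => a * r ^ i) *
      (Finset.range p).image (fun j => b * (r ^ k) ^ j)) := by
  have hmulexp : ∀ x y : ℕ, a * r ^ x * (b * r ^ y) = a * b * r ^ (x + y) := by
    intro x y; rw [pow_add]; ring
  set N := m + k * (p - 1) with hN
  have key : (Finset.range m).image (fun i => a * r ^ i) *
      (Finset.range p).image (fun j => b * (r ^ k) ^ j) =
      (Finset.range N).image (fun t => a * b * r ^ t) := by
    ext x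
    simp only [Finset.mem_mul, Finset.mem_image, Finset.mem_range]
    constructor
    · rintro ⟨y, ⟨i, hi, rfl⟩, z, ⟨j, hj, rfl⟩, rfl⟩
      refine ⟨i + k * j, ?_, ?_⟩
      · have h1 : k * j ≤ k * (p - 1) := Nat.mul_le_mul_left k (by omega)
        omega
      · rw [← pow_mul, hmulexp]
    · rintro ⟨t, ht, rfl⟩
      rcases le_total (t / k) (p - 1) with hc | hc
      · have hmod : t % k < k := Nat.mod_lt t (by omega)
        refine ⟨a * r ^ (t % k), ⟨t % k, by omega, rfl⟩,
          b * (r ^ k) ^ (t / k), ⟨t / k, by omega, rfl⟩, ?_⟩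
        rw [← pow_mul, hmulexp]
        have hexp : t % k + k * (t / k) = t := Nat.mod_add_div t k
        rw [hexp]
      · have h2 : k * (p - 1) ≤ t := by
          calc k * (p - 1) ≤ k * (t / k) := Nat.mul_le_mul_left k hc
          _ ≤ t := by rw [mul_comm]; exact Nat.div_mul_le_self t k
        refine ⟨a * r ^ (t - k * (p - 1)), ⟨t - k * (p - 1), by omega, rfl⟩,
          b * (r ^ k) ^ (p - 1), ⟨p - 1, by omega, rfl⟩, ?_⟩
        rw [← pow_mul, hmulexp]
        have hexp : t - k * (p - 1) + k * (p - 1) = t := by omega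
        rw [hexp]
  refine ⟨a * b, r, Nat.mul_pos ha hb, hr, ?_⟩
  rw [key, gp_card _ _ _ (Nat.mul_pos ha hb) hr]

/-- Forward key lemma. -/
lemma pow_of_prod_gp (a b r s m p : ℕ) (ha : 0 < a) (hb : 0 < b) (hr : 2 ≤ r)
    (hrs : r ≤ s) (hm : 2 ≤ m) (hp : 2 ≤ p)
    (h : IsGeomProg ((Finset.range m).image (fun i => a * r ^ i) *
      (Finset.range p).image (fun j => b * s ^ j))) :
    ∃ k : ℕ, 0 < k ∧ k ≤ m ∧ s = r ^ k := by
  obtain ⟨c, t, hc, ht, hA⟩ := h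
  set A := (Finset.range m).image (fun i => a * r ^ i) *
      (Finset.range p).image (fun j => b * s ^ j) with hAdef
  have hs2 : 2 ≤ s := le_trans hr hrs
  have hmemA : ∀ x, x ∈ A ↔ ∃ i j, i < m ∧ j < p ∧ x = a * b * (r ^ i * s ^ j) := by
    intro x
    simp only [hAdef, Finset.mem_mul, Finset.mem_image, Finset.mem_range]
    constructor
    · rintro ⟨y, ⟨i, hi, rfl⟩, z, ⟨j, hj, rfl⟩, rfl⟩
      exact ⟨i, j, hi, hj, by ring⟩
    · rintro ⟨i, j, hi, hj, rfl⟩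
      exact ⟨a * r ^ i, ⟨i, hi, rfl⟩, b * s ^ j, ⟨j, hj, rfl⟩, by ring⟩
  have hab : a * b ∈ A := (hmemA _).2 ⟨0, 0, by omega, by omega, by ring⟩
  have habr : a * b * r ∈ A := (hmemA _).2 ⟨1, 0, by omega, by omega, by ring⟩
  have habs : a * b * s ∈ A := (hmemA _).2 ⟨0, 1, by omega, by omega, by ring⟩
  have habpos : 0 < a * b := Nat.mul_pos ha hb
  have hcard2 : 2 ≤ A.card := by
    rw [show (2:ℕ) = 1 + 1 from rfl]
    refine Nat.succ_le_of_lt (Finset.one_lt_card.2 ⟨a * b, hab, a * b * r, habr, ?_⟩)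
    nlinarith
  have hgeq : ∀ x ∈ A, a * b ≤ x := by
    intro x hx
    obtain ⟨i, j, _, _, rfl⟩ := (hmemA x).1 hx
    have h1 : 1 ≤ r ^ i * s ^ j := Nat.one_le_iff_ne_zero.2 (by positivity)
    calc a * b = a * b * 1 := by ring
    _ ≤ a * b * (r ^ i * s ^ j) := Nat.mul_le_mul_left _ h1
  have hcmem : c ∈ A := by
    rw [hA]
    exact Finset.mem_image.2 ⟨0, Finset.mem_range.2 (by omega), by simp⟩
  have hcge : a * b ≤ c := hgeq c hcmem
  have hcle : c ≤ a * b := by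
    rw [hA] at hab
    obtain ⟨l, _, hl⟩ := Finset.mem_image.1 hab
    have h1 : 1 ≤ t ^ l := Nat.one_le_iff_ne_zero.2 (by positivity)
    calc c = c * 1 := by ring
    _ ≤ c * t ^ l := Nat.mul_le_mul_left _ h1
    _ = a * b := hl
  have hceq : c = a * b := le_antisymm hcle hcge
  -- c * t ∈ A, and t = r^i * s^j with (i,j) ≠ (0,0), so t ≥ r
  have hctmem : c * t ∈ A := by
    rw [hA]
    exact Finset.mem_image.2 ⟨1, Finset.mem_range.2 (by omega), by simp⟩
  have hcpos : 0 < c := by omega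
  have htger : r ≤ t := by
    obtain ⟨i, j, _, _, hij⟩ := (hmemA _).1 hctmem
    rw [← hceq] at hij
    have ht' : t = r ^ i * s ^ j := Nat.eq_of_mul_eq_mul_left hcpos hij
    rcases Nat.eq_zero_or_pos i with hi0 | hi1
    · rcases Nat.eq_zero_or_pos j with hj0 | hj1
      · rw [hi0, hj0] at ht'; simp at ht'; omega
      · have h2 : s ≤ s ^ j := Nat.le_self_pow (by omega) s
        have h1 : 1 ≤ r ^ i := Nat.one_le_iff_ne_zero.2 (by positivity)
        calc r ≤ s := hrs
        _ ≤ s ^ j := h2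
        _ = 1 * s ^ j := by ring
        _ ≤ r ^ i * s ^ j := Nat.mul_le_mul_right _ h1
        _ = t := ht'.symm
    · have h2 : r ≤ r ^ i := Nat.le_self_pow (by omega) r
      have h1 : 1 ≤ s ^ j := Nat.one_le_iff_ne_zero.2 (by positivity)
      calc r ≤ r ^ i := h2
      _ = r ^ i * 1 := by ring
      _ ≤ r ^ i * s ^ j := Nat.mul_le_mul_left _ h1
      _ = t := ht'.symm
  have htler : t ≤ r := by
    rw [hA] at habr
    obtain ⟨l, _, hl⟩ := Finset.mem_image.1 habr
    rw [hceq] at hl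
    have hrt : r = t ^ l := (Nat.eq_of_mul_eq_mul_left habpos hl).symm
    have hl1 : 1 ≤ l := by
      by_contra h0
      push_neg at h0
      interval_cases l
      simp at hrt; omega
    calc t ≤ t ^ l := Nat.le_self_pow (by omega) t
    _ = r := hrt.symm
  have hteq : t = r := le_antisymm htler htger
  -- a*b*s ∈ A = GP with ratio t = r, so s = r^k
  rw [hA] at habs
  obtain ⟨k, hkcard, hk⟩ := Finset.mem_image.1 habs
  rw [Finset.mem_range] at hkcard
  rw [hceq] at hk
  have hsk : s = t ^ k := (Nat.eq_of_mul_eq_mul_left habpos hk).symm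
  have hk1 : 1 ≤ k := by
    by_contra h0
    push_neg at h0
    interval_cases k
    simp at hsk; omega
  rw [hteq] at hsk
  refine ⟨k, hk1, ?_, hsk⟩
  -- show k ≤ m
  by_contra hkm
  push_neg at hkm
  have hmmem : c * t ^ m ∈ A := by
    rw [hA]
    exact Finset.mem_image.2 ⟨m, Finset.mem_range.2 (by omega), rfl⟩
  obtain ⟨i, j, hi, hj, hij⟩ := (hmemA _).1 hmmem
  rw [← hceq, hteq, hsk, ← pow_mul, ← pow_add] at hij
  have h1 : r ^ m = r ^ (i + k * j) := Nat.eq_of_mul_eq_mul_left hcpos hij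
  have h2 : m = i + k * j := Nat.pow_right_injective hr h1
  rcases Nat.eq_zero_or_pos j with hj0 | hj1
  · rw [hj0, Nat.mul_zero] at h2; omega
  · have h3 : k ≤ k * j := Nat.le_mul_of_pos_right k hj1
    omega

/-- Let `f` be a product set-labeling of the complete graph `K_n`
(`n ≥ 2`) such that every vertex label is a geometric progression with integer common
ratio `rv v ≥ 2` and `|f v| ≥ 2`. Then `f` is a geometric product set-labeling of `K_n`
iff for every pair of distinct vertices `u`, `v` written so that `rv u ≤ rv v`, there is
a positive integer `k ≤ |f u|` with `rv v = (rv u)^k`. -/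
theorem completeGraph_geometric_productSetLabeling_iff (n : ℕ) (hn : 2 ≤ n)
    (f : Fin n → Finset ℕ) (rv : Fin n → ℕ) (av : Fin n → ℕ)
    (hinj : Function.Injective f)
    (hr : ∀ v, 2 ≤ rv v) (ha : ∀ v, 0 < av v) (hcard : ∀ v, 2 ≤ (f v).card)
    (hgp : ∀ v, f v = (Finset.range (f v).card).image (fun i => av v * (rv v) ^ i)) :
    (∀ u v, (⊤ : SimpleGraph (Fin n)).Adj u v → IsGeomProg (f u * f v)) ↔
      (∀ u v : Fin n, u ≠ v → rv u ≤ rv v →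
        ∃ k : ℕ, 0 < k ∧ k ≤ (f u).card ∧ rv v = (rv u) ^ k) := by
  constructor
  · intro hGP u v huv hle
    have hA := hGP u v (by simpa using huv)
    rw [hgp u, hgp v] at hA
    exact pow_of_prod_gp (av u) (av v) (rv u) (rv v) _ _ (ha u) (ha v) (hr u) hle
      (hcard u) (hcard v) hA
  · intro hk u v hadj
    have huv : u ≠ v := by simpa using hadj
    rcases le_total (rv u) (rv v) with hle | hle
    · obtain ⟨k, hk1, hkm, hks⟩ := hk u v huv hle
      rw [hgp u, hgp v, hks]
      exact prod_gp_of_pow (av u) (av v) (rv u) _ _ k (ha u) (ha v) (hr u)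
        (hcard u) (hcard v) hk1 hkm
    · obtain ⟨k, hk1, hkm, hks⟩ := hk v u huv.symm hle
      rw [hgp u, hgp v, hks, mul_comm]
      exact prod_gp_of_pow (av v) (av u) (rv v) _ _ k (ha v) (ha u) (hr v)
        (hcard v) (hcard u) hk1 hkm
end

section
/- Let G be a finite simple graph and f a geometric product set-labeling of G in which every vertex label f(v) is a geometric progression with integer common ratio r_v ≥ 2 and |f(v)| ≥ 2. Then f is a strong product set-labeling (i.e., |f(u)∗f(v)| = |f(u)|·|f(v)| for every edge uv) if and only if for every edge uv, writing the endpoints so that r_u ≤ r_v, one has r_v = r_u^{|f(u)|} (i.e., the characteristic index of every edge equals the label size of its end vertex having smaller common ratio). -/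
open Pointwise

private lemma geomStrictMono (a r : ℕ) (ha : 0 < a) (hr : 2 ≤ r) :
    StrictMono (fun k => a * r ^ k) := fun i j hij =>
  (Nat.mul_lt_mul_left ha).mpr (Nat.pow_lt_pow_right (by omega) hij)

private lemma prod_image_eq (a b r m n : ℕ) (hm : 0 < m) :
    ((Finset.range m).image (fun i => a * r ^ i)) *
      ((Finset.range n).image (fun j => b * (r ^ m) ^ j)) =
    (Finset.range (m * n)).image (fun k => a * b * r ^ k) := by
  ext x
  simp only [Finset.mem_mul, Finset.mem_image, Finset.mem_range]
  constructor
  · rintro ⟨y, ⟨i, hi, rfl⟩, z, ⟨j, hj, rfl⟩, rfl⟩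
    refine ⟨i + m * j, ?_, ?_⟩
    · calc i + m * j < m + m * j := by omega
        _ = m * (j + 1) := by ring
        _ ≤ m * n := Nat.mul_le_mul_left m (by omega)
    · rw [pow_add, ← pow_mul]; ring
  · rintro ⟨k, hk, rfl⟩
    refine ⟨a * r ^ (k % m), ⟨k % m, Nat.mod_lt _ hm, rfl⟩,
      b * (r ^ m) ^ (k / m), ⟨k / m, ?_, rfl⟩, ?_⟩
    · exact Nat.div_lt_of_lt_mul hk
    · rw [← pow_mul, show a * r ^ (k % m) * (b * r ^ (m * (k / m))) =
        a * b * (r ^ (k % m) * r ^ (m * (k / m))) from by ring, ← pow_add,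
        Nat.mod_add_div]

private lemma card_prod_image (a b r m n : ℕ) (ha : 0 < a) (hb : 0 < b) (hr : 2 ≤ r)
    (hm : 0 < m) :
    (((Finset.range m).image (fun i => a * r ^ i)) *
      ((Finset.range n).image (fun j => b * (r ^ m) ^ j))).card = m * n := by
  rw [prod_image_eq _ _ _ _ _ hm,
    Finset.card_image_of_injective _ (geomStrictMono _ _ (Nat.mul_pos ha hb) hr).injective,
    Finset.card_range]

private lemma forward_aux (a b r s m n : ℕ) (ha : 0 < a) (hb : 0 < b)
    (hr : 2 ≤ r) (hs : 2 ≤ s) (hm : 2 ≤ m) (hn : 2 ≤ n) (hrs : r ≤ s)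
    (hgeom : IsGeomProg ((Finset.range m).image (fun i => a * r ^ i) *
      (Finset.range n).image (fun j => b * s ^ j)))
    (hcard : ((Finset.range m).image (fun i => a * r ^ i) *
      (Finset.range n).image (fun j => b * s ^ j)).card = m * n) :
    s = r ^ m := by
  obtain ⟨c, t, hc, ht, hAB⟩ := hgeom
  rw [hcard] at hAB
  have hab : 0 < a * b := Nat.mul_pos ha hb
  have hmn : 4 ≤ m * n := by calc 4 = 2 * 2 := rfl
                                _ ≤ m * n := Nat.mul_le_mul hm hn
  have key : ∀ x : ℕ, (∃ i < m, ∃ j < n, a * b * (r ^ i * s ^ j) = x) ↔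
      ∃ k < m * n, c * t ^ k = x := by
    intro x
    have h1 : x ∈ (Finset.range m).image (fun i => a * r ^ i) *
        (Finset.range n).image (fun j => b * s ^ j) ↔
        x ∈ (Finset.range (m * n)).image (fun k => c * t ^ k) := by rw [hAB]
    simp only [Finset.mem_mul, Finset.mem_image, Finset.mem_range] at h1
    constructor
    · rintro ⟨i, hi, j, hj, rfl⟩
      exact h1.mp ⟨_, ⟨i, hi, rfl⟩, _, ⟨j, hj, rfl⟩, by ring⟩
    · rintro ⟨k, hk, rfl⟩
      obtain ⟨y, ⟨i, hi, rfl⟩, z, ⟨j, hj, rfl⟩, h⟩ := h1.mpr ⟨k, hk, rfl⟩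
      exact ⟨i, hi, j, hj, by rw [← h]; ring⟩
  -- c = a * b
  have hcab : c = a * b := by
    obtain ⟨k, hk, e1⟩ := (key (a * b)).mp ⟨0, by omega, 0, by omega, by simp⟩
    obtain ⟨i, hi, j, hj, e2⟩ := (key c).mpr ⟨0, by omega, by simp⟩
    have h1 : c ≤ a * b := by
      calc c ≤ c * t ^ k := Nat.le_mul_of_pos_right c (pow_pos (by omega) k)
        _ = a * b := e1
    have h2 : a * b ≤ c := by
      calc a * b ≤ a * b * (r ^ i * s ^ j) :=
            Nat.le_mul_of_pos_right _ (Nat.mul_pos (pow_pos (by omega) i)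
              (pow_pos (by omega) j))
        _ = c := e2
    omega
  subst hcab
  -- t = r
  have htr : t = r := by
    obtain ⟨k, hk, e1⟩ := (key (a * b * r)).mp ⟨1, by omega, 0, by omega, by simp⟩
    have e1' : t ^ k = r := Nat.eq_of_mul_eq_mul_left hab e1
    have hk1 : 1 ≤ k := by
      rcases Nat.eq_zero_or_pos k with h0 | h0
      · subst h0; simp at e1'; omega
      · exact h0
    have h1 : t ≤ r := by
      calc t = t ^ 1 := (pow_one t).symm
        _ ≤ t ^ k := Nat.pow_le_pow_right (by omega) hk1
        _ = r := e1'
    obtain ⟨i, hi, j, hj, e2⟩ := (key (a * b * t)).mpr ⟨1, by omega, by rw [pow_one]⟩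
    have e2' : r ^ i * s ^ j = t := Nat.eq_of_mul_eq_mul_left hab e2
    have h2 : r ≤ t := by
      rw [← e2']
      rcases Nat.eq_zero_or_pos i with hi0 | hi0
      · subst hi0
        have hj0 : 0 < j := by
          rcases Nat.eq_zero_or_pos j with hj0 | hj0
          · exfalso; subst hj0; simp at e2'; omega
          · exact hj0
        calc r ≤ s := hrs
          _ = s ^ 1 := (pow_one s).symm
          _ ≤ s ^ j := Nat.pow_le_pow_right (by omega) hj0
          _ = 1 * s ^ j := (one_mul _).symm
          _ ≤ r ^ 0 * s ^ j := by simp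
      · calc r = r ^ 1 * 1 := by ring
          _ ≤ r ^ i * s ^ j := Nat.mul_le_mul (Nat.pow_le_pow_right (by omega) hi0)
              (Nat.one_le_pow _ _ (by omega))
    omega
  rw [htr] at key
  -- s = r ^ K
  obtain ⟨K, hK, eK⟩ := (key (a * b * s)).mp ⟨0, by omega, 1, by omega, by simp⟩
  have eK' : r ^ K = s := Nat.eq_of_mul_eq_mul_left hab eK
  -- the maximum exponent
  have hE : (m - 1) + K * (n - 1) < m * n := by
    obtain ⟨k, hk, e1⟩ := (key (a * b * (r ^ (m - 1) * s ^ (n - 1)))).mp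
      ⟨m - 1, by omega, n - 1, by omega, rfl⟩
    have e1' : r ^ k = r ^ ((m - 1) + K * (n - 1)) := by
      have := Nat.eq_of_mul_eq_mul_left hab e1
      rw [this, ← eK', ← pow_mul, ← pow_add]
    have := Nat.pow_right_injective hr e1'
    omega
  have hE2 : m * n - 1 ≤ (m - 1) + K * (n - 1) := by
    obtain ⟨i, hi, j, hj, e2⟩ := (key (a * b * r ^ (m * n - 1))).mpr
      ⟨m * n - 1, by omega, rfl⟩
    have e2' : r ^ (i + K * j) = r ^ (m * n - 1) := by
      have h := Nat.eq_of_mul_eq_mul_left hab e2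
      rw [← h, ← eK', ← pow_mul, ← pow_add]
    have h3 := Nat.pow_right_injective hr e2'
    have h4 : K * j ≤ K * (n - 1) := Nat.mul_le_mul_left K (by omega)
    omega
  have hfac : (m - 1) + K * (n - 1) + 1 = m * n := by omega
  have hmn' : m * n = m * (n - 1) + m := by
    calc m * n = m * ((n - 1) + 1) := by rw [Nat.sub_add_cancel (by omega)]
      _ = m * (n - 1) + m := by ring
  have hKn : K * (n - 1) = m * (n - 1) := by omega
  have hKm : K = m := Nat.eq_of_mul_eq_mul_right (by omega : 0 < n - 1) hKn
  rw [← eK', hKm]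

/-- Let `f` be a geometric product set-labeling of a finite simple graph
`G` in which every vertex label is a geometric progression with integer common ratio
`rv v ≥ 2` and `|f v| ≥ 2`. Then `f` is strong (`|f u ∗ f v| = |f u|·|f v|` for every
edge `uv`) iff for every edge `uv`, written so that `rv u ≤ rv v`, one has
`rv v = (rv u)^{|f u|}`. -/
theorem geometric_strong_productSetLabeling_iff {V : Type*} [Fintype V]
    (G : SimpleGraph V) (f : V → Finset ℕ) (rv : V → ℕ) (av : V → ℕ)
    (hinj : Function.Injective f)
    (hr : ∀ v, 2 ≤ rv v) (ha : ∀ v, 0 < av v) (hcard : ∀ v, 2 ≤ (f v).card)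
    (hgp : ∀ v, f v = (Finset.range (f v).card).image (fun i => av v * (rv v) ^ i))
    (hgeom : ∀ u v, G.Adj u v → IsGeomProg (f u * f v)) :
    (∀ u v, G.Adj u v → (f u * f v).card = (f u).card * (f v).card) ↔
      (∀ u v, G.Adj u v → rv u ≤ rv v → rv v = (rv u) ^ (f u).card) := by
  constructor
  · intro hstrong u v huv hle
    apply forward_aux (av u) (av v) (rv u) (rv v) ((f u).card) ((f v).card)
      (ha u) (ha v) (hr u) (hr v) (hcard u) (hcard v) hle
    · rw [← hgp u, ← hgp v]; exact hgeom u v huv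
    · rw [← hgp u, ← hgp v]; exact hstrong u v huv
  · intro hcond u v huv
    rcases le_total (rv u) (rv v) with hle | hle
    · have hs := hcond u v huv hle
      conv_lhs => rw [hgp u, hgp v, hs]
      exact card_prod_image _ _ _ _ _ (ha u) (ha v) (hr u) (by have := hcard u; omega)
    · have hs := hcond v u huv.symm hle
      have h1 : (f v * f u).card = (f v).card * (f u).card := by
        conv_lhs => rw [hgp v, hgp u, hs]
        exact card_prod_image _ _ _ _ _ (ha v) (ha u) (hr v) (by have := hcard v; omega)
      rw [mul_comm (f u) (f v), h1, Nat.mul_comm]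
end

section
/- Let G be a finite connected simple graph with at least one edge and let f be an isogeometric product set-labeling of G. Then f is a uniform product set-labeling (all edge labels have the same cardinality) if and only if either (i) all vertex labels of G have the same cardinality, or (ii) G is bipartite with a bipartition (X, Y) such that the cardinality of the vertex labels is constant on X and constant on Y. -/
open Pointwise

/-- A finite set of positive integers is a geometric progression with common ratio `r`
(for some integer first term `a > 0`). -/
def IsGeomProgWith (A : Finset ℕ) (r : ℕ) : Prop :=
  ∃ a : ℕ, 0 < a ∧ A = (Finset.range A.card).image (fun i => a * r ^ i)

lemma gp_mul (a b r m n : ℕ) (hm : 0 < m) (hn : 0 < n) :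
    ((Finset.range m).image (fun i => a * r ^ i)) * ((Finset.range n).image (fun i => b * r ^ i))
      = (Finset.range (m + n - 1)).image (fun i => a * b * r ^ i) := by
  ext x
  simp only [Finset.mem_mul, Finset.mem_image, Finset.mem_range]
  constructor
  · rintro ⟨_, ⟨i, hi, rfl⟩, _, ⟨j, hj, rfl⟩, rfl⟩
    exact ⟨i + j, by omega, by rw [mul_mul_mul_comm, ← pow_add]⟩
  · rintro ⟨k, hk, rfl⟩
    refine ⟨a * r ^ min k (m-1), ⟨min k (m-1), by omega, rfl⟩,
      b * r ^ (k - min k (m-1)), ⟨k - min k (m-1), by omega, rfl⟩, ?_⟩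
    rw [mul_mul_mul_comm, ← pow_add]
    congr 2
    omega

/-- Let `G` be a finite connected simple graph with at least one edge
and `f` an isogeometric product set-labeling of `G` (injective with nonempty labels, all
labels geometric progressions with the same common ratio `r ≥ 2`). Then `f` is uniform
(all edge labels have the same cardinality) iff either all vertex labels have the same
cardinality, or `G` is bipartite with a bipartition `(X, Xᶜ)` on each side of which the
cardinality of the vertex labels is constant. -/
theorem isogeometric_uniform_iff {V : Type*} [Fintype V]
    (G : SimpleGraph V) (hconn : G.Connected) (hedge : ∃ u v, G.Adj u v)
    (f : V → Finset ℕ) (r : ℕ) (hr : 2 ≤ r)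
    (hinj : Function.Injective f)
    (hne : ∀ v, (f v).Nonempty)
    (hiso : ∀ v, IsGeomProgWith (f v) r) :
    (∃ c : ℕ, ∀ u v, G.Adj u v → (f u * f v).card = c) ↔
      ((∀ u v : V, (f u).card = (f v).card) ∨
        (∃ X : Set V, (∀ u v, G.Adj u v → (u ∈ X ↔ v ∉ X)) ∧
          (∀ u ∈ X, ∀ v ∈ X, (f u).card = (f v).card) ∧
          (∀ u ∉ X, ∀ v ∉ X, (f u).card = (f v).card))) := by
  have key : ∀ u v : V, (f u * f v).card = (f u).card + (f v).card - 1 := by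
    intro u v
    obtain ⟨a, ha, hA⟩ := hiso u
    obtain ⟨b, hb, hB⟩ := hiso v
    have hm : 0 < (f u).card := Finset.card_pos.mpr (hne u)
    have hn : 0 < (f v).card := Finset.card_pos.mpr (hne v)
    set m := (f u).card with hmdef
    set n := (f v).card with hndef
    rw [hA, hB, gp_mul a b r m n hm hn, gp_card (a * b) r _ (Nat.mul_pos ha hb) hr]
  obtain ⟨u0, v0, huv⟩ := hedge
  constructor
  · rintro ⟨c, hc⟩
    have hsum : ∀ u v, G.Adj u v → (f u).card + (f v).card = c + 1 := by
      intro u v h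
      have h1 := hc u v h
      have hm : 0 < (f u).card := Finset.card_pos.mpr (hne u)
      have hn : 0 < (f v).card := Finset.card_pos.mpr (hne v)
      rw [key u v] at h1
      omega
    set k := (f u0).card with hk
    have hkc : k ≤ c := by
      have h1 := hsum u0 v0 huv
      have h2 := Finset.card_pos.mpr (hne v0)
      omega
    have step : ∀ {x y : V}, G.Walk x y →
        ((f x).card = k ∨ (f x).card = c + 1 - k) →
        ((f y).card = k ∨ (f y).card = c + 1 - k) := by
      intro x y w
      induction w with
      | nil => exact id
      | cons h p ih =>
        intro hx
        apply ih
        have hs := hsum _ _ h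
        omega
    have claim : ∀ v, (f v).card = k ∨ (f v).card = c + 1 - k := fun v =>
      step (hconn u0 v).some (Or.inl rfl)
    by_cases hcase : c + 1 - k = k
    · left
      intro u v
      rcases claim u with h | h <;> rcases claim v with h' | h' <;> omega
    · right
      refine ⟨{v | (f v).card = k}, ?_, ?_, ?_⟩
      · intro u v h
        have hs := hsum u v h
        have hu := claim u
        have hv := claim v
        simp only [Set.mem_setOf_eq]
        omega
      · intro u hu v hv
        simp only [Set.mem_setOf_eq] at hu hv
        omega
      · intro u hu v hv
        simp only [Set.mem_setOf_eq] at hu hv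
        have h1 := claim u
        have h2 := claim v
        omega
  · rintro (hall | ⟨X, hX, hX1, hX2⟩)
    · refine ⟨2 * (f u0).card - 1, fun u v h => ?_⟩
      rw [key]
      have h1 := hall u u0
      have h2 := hall v u0
      omega
    · refine ⟨(f u0).card + (f v0).card - 1, fun u v h => ?_⟩
      rw [key]
      have h0 := hX u0 v0 huv
      have h1 := hX u v h
      by_cases hu0 : u0 ∈ X
      · have hv0 : v0 ∉ X := h0.mp hu0
        by_cases hu : u ∈ X
        · have hv : v ∉ X := h1.mp hu
          rw [hX1 u hu u0 hu0, hX2 v hv v0 hv0]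
        · have hv : v ∈ X := by
            by_contra hv
            exact hu (h1.mpr hv)
          rw [hX2 u hu v0 hv0, hX1 v hv u0 hu0]
          omega
      · have hv0 : v0 ∈ X := by
          by_contra hv0
          exact hu0 (h0.mpr hv0)
        by_cases hu : u ∈ X
        · have hv : v ∉ X := h1.mp hu
          rw [hX1 u hu v0 hv0, hX2 v hv u0 hu0]
          omega
        · have hv : v ∈ X := by
            by_contra hv
            exact hu (h1.mpr hv)
          rw [hX2 u hu u0 hu0, hX1 v hv v0 hv0]
end

section
/- A finite simple graph G admits a like-geometric product set-labeling if and only if G is bipartite. -/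
open Pointwise

open ArithmeticFunction ArithmeticFunction.Omega in
private lemma omega_pow {n : ℕ} (hn : n ≠ 0) (k : ℕ) : Ω (n ^ k) = k * Ω n := by
  induction k with
  | zero => simp
  | succ k ih =>
    rw [pow_succ, ArithmeticFunction.cardFactors_mul (pow_ne_zero _ hn) hn, ih]
    ring

open ArithmeticFunction ArithmeticFunction.Omega in
private lemma omega_pos {n : ℕ} (hn : 2 ≤ n) : 0 < Ω n := by
  obtain ⟨p, hp, hpd⟩ := Nat.exists_prime_and_dvd (by omega : n ≠ 1)
  have : p ∈ n.primeFactorsList := (Nat.mem_primeFactorsList (by omega)).mpr ⟨hp, hpd⟩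
  rw [ArithmeticFunction.cardFactors_apply]
  exact List.length_pos_iff.mpr (List.ne_nil_of_mem this)

private lemma pair_mul_pair (a b : ℕ) :
    ({a, a * 2} : Finset ℕ) * ({b, b * 4} : Finset ℕ)
      = {a * b, a * b * 2, a * b * 4, a * b * 8} := by
  ext x
  simp only [Finset.mem_mul, Finset.mem_insert, Finset.mem_singleton]
  constructor
  · rintro ⟨y, (rfl | rfl), z, (rfl | rfl), rfl⟩
    · left; ring
    · right; right; left; ring
    · right; left; ring
    · right; right; right; ring
  · rintro (rfl | rfl | rfl | rfl)
    · exact ⟨a, Or.inl rfl, b, Or.inl rfl, rfl⟩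
    · exact ⟨a * 2, Or.inr rfl, b, Or.inl rfl, by ring⟩
    · exact ⟨a, Or.inl rfl, b * 4, Or.inr rfl, by ring⟩
    · exact ⟨a * 2, Or.inr rfl, b * 4, Or.inr rfl, by ring⟩

private lemma quad_card {m : ℕ} (hm : 0 < m) :
    ({m, m * 2, m * 4, m * 8} : Finset ℕ).card = 4 := by
  rw [Finset.card_insert_of_notMem (by simp; omega),
    Finset.card_insert_of_notMem (by simp; omega),
    Finset.card_insert_of_notMem (by simp; omega), Finset.card_singleton]

private lemma quad_geom {m : ℕ} (hm : 0 < m) :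
    IsGeomProg ({m, m * 2, m * 4, m * 8} : Finset ℕ) := by
  refine ⟨m, 2, hm, le_refl 2, ?_⟩
  rw [quad_card hm]
  have h4 : Finset.range 4 = {0, 1, 2, 3} := by decide
  rw [h4]
  simp only [Finset.image_insert, Finset.image_singleton]
  norm_num

private lemma geom_pair_mul {a b : ℕ} (ha : 0 < a) (hb : 0 < b) :
    IsGeomProg (({a, a * 2} : Finset ℕ) * ({b, b * 4} : Finset ℕ)) := by
  rw [pair_mul_pair]
  exact quad_geom (by positivity)

/-- A finite simple graph `G` admits a like-geometric product
set-labeling (an injective labeling `f` by nonempty finite sets of positive integers such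
that each vertex label is a geometric progression with integer common ratio `rv v ≥ 2`
and `|f v| ≥ 2`, every edge label is a geometric progression, and there is a common
characteristic index `k > 1` with `rv v = (rv u)^k` or `rv u = (rv v)^k` for every edge
`uv`) iff `G` is bipartite. -/
theorem likeGeometric_iff_bipartite {V : Type*} [Fintype V] (G : SimpleGraph V) :
    (∃ (f : V → Finset ℕ) (rv av : V → ℕ) (k : ℕ),
      Function.Injective f ∧
      (∀ v, 2 ≤ rv v) ∧ (∀ v, 0 < av v) ∧ (∀ v, 2 ≤ (f v).card) ∧
      (∀ v, f v = (Finset.range (f v).card).image (fun i => av v * (rv v) ^ i)) ∧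
      (∀ u v, G.Adj u v → IsGeomProg (f u * f v)) ∧
      1 < k ∧
      (∀ u v, G.Adj u v → (rv v = (rv u) ^ k ∨ rv u = (rv v) ^ k))) ↔
    G.Colorable 2 := by
  constructor
  · rintro ⟨f, rv, av, k, hinj, hrv, hav, hcard, hf, hedge, hk, hratio⟩
    classical
    set g : V → ℕ := fun v => Nat.log k (ArithmeticFunction.cardFactors (rv v)) with hg
    have key : ∀ u v, G.Adj u v → g v = g u + 1 ∨ g u = g v + 1 := by
      intro u v huv
      have step : ∀ x y : V, rv y = rv x ^ k → g y = g x + 1 := by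
        intro x y hxy
        have hΩ : ArithmeticFunction.cardFactors (rv y)
            = ArithmeticFunction.cardFactors (rv x) * k := by
          rw [hxy, omega_pow (by have := hrv x; omega) k]; ring
        have hpos := omega_pos (hrv x)
        simp only [hg]
        rw [hΩ, Nat.log_mul_base hk (by omega)]
      rcases hratio u v huv with h | h
      · exact Or.inl (step u v h)
      · exact Or.inr (step v u h)
    refine ⟨SimpleGraph.Coloring.mk (fun v => (⟨g v % 2, by omega⟩ : Fin 2)) ?_⟩
    intro u v huv
    have := key u v huv
    simp only [ne_eq, Fin.mk.injEq]
    omega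
  · rintro ⟨C⟩
    classical
    set av : V → ℕ := fun v => (Fintype.equivFin V v : ℕ) + 1 with hav
    have hav_pos : ∀ v, 0 < av v := fun v => Nat.succ_pos _
    have hav_inj : Function.Injective av := by
      intro u v h
      have : (Fintype.equivFin V u : ℕ) = (Fintype.equivFin V v : ℕ) := by
        simpa [hav] using h
      exact (Fintype.equivFin V).injective (Fin.val_injective this)
    set rv : V → ℕ := fun v => 2 ^ ((C v : ℕ) + 1) with hrvdef
    have hrv2 : ∀ v, rv v = 2 ∨ rv v = 4 := by
      intro v
      have : (C v : ℕ) = 0 ∨ (C v : ℕ) = 1 := by omega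
      rcases this with h | h <;> simp [hrvdef, h]
    have hrv_ge : ∀ v, 2 ≤ rv v := by
      intro v; rcases hrv2 v with h | h <;> omega
    set f : V → Finset ℕ := fun v => {av v, av v * rv v} with hfdef
    have hne : ∀ v, av v ≠ av v * rv v := by
      intro v
      have := hav_pos v; have := hrv_ge v
      nlinarith [hav_pos v, hrv_ge v]
    have hc2 : ∀ v, (f v).card = 2 := by
      intro v
      rw [hfdef]
      simp only
      rw [Finset.card_insert_of_notMem (by simp [hne v]), Finset.card_singleton]
    refine ⟨f, rv, av, 2, ?_, hrv_ge, hav_pos, ?_, ?_, ?_, one_lt_two, ?_⟩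
    · -- injectivity of f
      intro u v huv
      apply hav_inj
      have h1 : av u ∈ f v := by rw [← huv, hfdef]; simp
      have h2 : av v ∈ f u := by rw [huv, hfdef]; simp
      simp only [hfdef, Finset.mem_insert, Finset.mem_singleton] at h1 h2
      rcases h1 with h1 | h1
      · exact h1
      · rcases h2 with h2 | h2
        · exact h2.symm
        · exfalso
          have hu := hav_pos u; have hvp := hav_pos v
          have hru := hrv_ge u; have hrvv := hrv_ge v
          nlinarith
    · intro v; rw [hc2 v]
    · intro v
      rw [hc2 v]
      have h2 : Finset.range 2 = {0, 1} := by decide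
      rw [h2]
      simp only [Finset.image_insert, Finset.image_singleton, pow_zero, pow_one, mul_one,
        hfdef]
    · -- edge labels
      intro u v huv
      have hCne : C u ≠ C v := C.valid huv
      have hcase : ((C u : ℕ) = 0 ∧ (C v : ℕ) = 1) ∨ ((C u : ℕ) = 1 ∧ (C v : ℕ) = 0) := by
        have h1 : (C u : ℕ) < 2 := (C u).isLt
        have h2 : (C v : ℕ) < 2 := (C v).isLt
        have : (C u : ℕ) ≠ (C v : ℕ) := fun h => hCne (Fin.val_injective h)
        omega
      rcases hcase with ⟨hu, hv⟩ | ⟨hu, hv⟩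
      · have hru : rv u = 2 := by simp [hrvdef, hu]
        have hrvv : rv v = 4 := by simp [hrvdef, hv]
        have : f u * f v = ({av u, av u * 2} : Finset ℕ) * ({av v, av v * 4} : Finset ℕ) := by
          rw [hfdef]; simp only [hru, hrvv]
        rw [this]
        exact geom_pair_mul (hav_pos u) (hav_pos v)
      · have hru : rv u = 4 := by simp [hrvdef, hu]
        have hrvv : rv v = 2 := by simp [hrvdef, hv]
        have : f u * f v = ({av v, av v * 2} : Finset ℕ) * ({av u, av u * 4} : Finset ℕ) := by
          rw [hfdef]; simp only [hru, hrvv]; rw [mul_comm]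
        rw [this]
        exact geom_pair_mul (hav_pos v) (hav_pos u)
    · -- ratio condition
      intro u v huv
      have hCne : C u ≠ C v := C.valid huv
      have hcase : ((C u : ℕ) = 0 ∧ (C v : ℕ) = 1) ∨ ((C u : ℕ) = 1 ∧ (C v : ℕ) = 0) := by
        have h1 : (C u : ℕ) < 2 := (C u).isLt
        have h2 : (C v : ℕ) < 2 := (C v).isLt
        have : (C u : ℕ) ≠ (C v : ℕ) := fun h => hCne (Fin.val_injective h)
        omega
      rcases hcase with ⟨hu, hv⟩ | ⟨hu, hv⟩
      · left; simp [hrvdef, hu, hv]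
      · right; simp [hrvdef, hu, hv]
end

section
/- Let G be a finite connected bipartite simple graph with bipartition (X, Y) and at least one edge, and let f be a like-geometric product set-labeling of G with common characteristic index k such that for every edge uv with u ∈ X and v ∈ Y one has r_v = r_u^k (i.e., X is the side of smaller common ratios). Then f is a uniform product set-labeling (all edge labels have the same cardinality) if and only if the cardinality of the vertex labels is constant on X and constant on Y. -/
open Pointwise

lemma card_geom_mul (a b r k nu nv : ℕ) (ha : 0 < a) (hb : 0 < b) (hr : 2 ≤ r)
    (hnu : 2 ≤ nu) (hnv : 2 ≤ nv)
    (hgp : IsGeomProg (((Finset.range nu).image (fun i => a * r ^ i)) *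
      ((Finset.range nv).image (fun j => b * (r ^ k) ^ j)))) :
    (((Finset.range nu).image (fun i => a * r ^ i)) *
      ((Finset.range nv).image (fun j => b * (r ^ k) ^ j))).card = nu + k * (nv - 1) := by
  set S : Finset ℕ := ((Finset.range nu).image (fun i => a * r ^ i)) *
      ((Finset.range nv).image (fun j => b * (r ^ k) ^ j)) with hSdef
  have hab : 0 < a * b := Nat.mul_pos ha hb
  have hrpos : 0 < r := by omega
  have hmem : ∀ x, x ∈ S ↔ ∃ i < nu, ∃ j < nv, x = a * b * r ^ (i + k * j) := by
    intro x
    rw [hSdef, Finset.mem_mul]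
    constructor
    · rintro ⟨y, hy, z, hz, hyz⟩
      simp only [Finset.mem_image, Finset.mem_range] at hy hz
      obtain ⟨i, hi, rfl⟩ := hy
      obtain ⟨j, hj, rfl⟩ := hz
      exact ⟨i, hi, j, hj, by rw [← hyz, ← pow_mul]; ring⟩
    · rintro ⟨i, hi, j, hj, rfl⟩
      refine ⟨a * r ^ i, ?_, b * (r ^ k) ^ j, ?_, ?_⟩
      · exact Finset.mem_image.2 ⟨i, Finset.mem_range.2 hi, rfl⟩
      · exact Finset.mem_image.2 ⟨j, Finset.mem_range.2 hj, rfl⟩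
      · rw [← pow_mul]; ring
  obtain ⟨A, s, hA, hs, hS⟩ := hgp
  set c := S.card with hc
  have hmem' : ∀ x, x ∈ S ↔ ∃ m < c, x = A * s ^ m := by
    intro x
    rw [hS, Finset.mem_image]
    constructor
    · rintro ⟨m, hm, rfl⟩; exact ⟨m, Finset.mem_range.1 hm, rfl⟩
    · rintro ⟨m, hm, rfl⟩; exact ⟨m, Finset.mem_range.2 hm, rfl⟩
  have habS : a * b ∈ S := (hmem _).2 ⟨0, by omega, 0, by omega, by simp⟩
  have habrS : a * b * r ∈ S := (hmem _).2 ⟨1, by omega, 0, by omega, by simp⟩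
  have hc2 : 2 ≤ c := by
    rw [hc]
    refine Finset.one_lt_card.2 ⟨a * b, habS, a * b * r, habrS, ?_⟩
    have : a * b * 1 < a * b * r := by nlinarith
    omega
  have hAS : A ∈ S := (hmem' _).2 ⟨0, by omega, by simp⟩
  have hAsS : A * s ∈ S := (hmem' _).2 ⟨1, by omega, by simp⟩
  have hlow1 : ∀ x ∈ S, a * b ≤ x := by
    intro x hx
    obtain ⟨i, hi, j, hj, rfl⟩ := (hmem _).1 hx
    exact Nat.le_mul_of_pos_right _ (Nat.pow_pos hrpos)
  have hlow2 : ∀ x ∈ S, A ≤ x := by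
    intro x hx
    obtain ⟨m, hm, rfl⟩ := (hmem' _).1 hx
    exact Nat.le_mul_of_pos_right _ (Nat.pow_pos (by omega))
  have hAab : A = a * b := le_antisymm (hlow2 _ habS) (hlow1 _ hAS)
  subst hAab
  have hsr : s = r := by
    obtain ⟨i, hi, j, hj, he⟩ := (hmem _).1 hAsS
    set e := i + k * j with hedef
    have hse : s = r ^ e := Nat.eq_of_mul_eq_mul_left hab he
    have he1 : 1 ≤ e := by
      by_contra h
      push_neg at h
      interval_cases e
      simp at hse; omega
    obtain ⟨m, hm, hrm⟩ := (hmem' _).1 habrS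
    have : r = s ^ m := Nat.eq_of_mul_eq_mul_left hab hrm
    rw [hse, ← pow_mul] at this
    have : r ^ 1 = r ^ (e * m) := by rw [pow_one]; exact this
    have hem := Nat.pow_right_injective hr this
    have : e = 1 := Nat.eq_one_of_mul_eq_one_right hem.symm
    rw [hse, this, pow_one]
  subst hsr
  have hspos : 0 < s := by omega
  set Em := (nu - 1) + k * (nv - 1) with hEm
  have hmaxS : a * b * s ^ Em ∈ S := (hmem _).2 ⟨nu - 1, by omega, nv - 1, by omega, rfl⟩
  have hub1 : ∀ x ∈ S, x ≤ a * b * s ^ Em := by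
    intro x hx
    obtain ⟨i, hi, j, hj, rfl⟩ := (hmem _).1 hx
    have : i + k * j ≤ Em := by
      have : k * j ≤ k * (nv - 1) := Nat.mul_le_mul_left _ (by omega)
      omega
    exact Nat.mul_le_mul_left _ (Nat.pow_le_pow_right hspos this)
  have hmaxS' : a * b * s ^ (c - 1) ∈ S := (hmem' _).2 ⟨c - 1, by omega, rfl⟩
  have hub2 : ∀ x ∈ S, x ≤ a * b * s ^ (c - 1) := by
    intro x hx
    obtain ⟨m, hm, rfl⟩ := (hmem' _).1 hx
    exact Nat.mul_le_mul_left _ (Nat.pow_le_pow_right hspos (show m ≤ c - 1 by omega))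
  have heq : a * b * s ^ Em = a * b * s ^ (c - 1) :=
    le_antisymm (hub2 _ hmaxS) (hub1 _ hmaxS')
  have := Nat.pow_right_injective hs (Nat.eq_of_mul_eq_mul_left hab heq)
  omega

lemma const_of_adj {V : Type*} {G : SimpleGraph V} (h : G.Preconnected) {ψ : V → ℤ}
    (hadj : ∀ u v, G.Adj u v → ψ u = ψ v) (u v : V) : ψ u = ψ v := by
  obtain ⟨p⟩ := h u v
  induction p with
  | nil => rfl
  | cons h' _ ih => exact (hadj _ _ h').trans ih

/-- Let `G` be a finite connected bipartite simple graph with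
bipartition `(X, Xᶜ)` and at least one edge, and let `f` be a like-geometric product
set-labeling of `G` with common characteristic index `k` such that for every edge `uv`
with `u ∈ X` one has `rv v = (rv u)^k` (so `X` is the side of smaller common ratios).
Then `f` is uniform (all edge labels have the same cardinality) iff the cardinality of
the vertex labels is constant on `X` and constant on `Xᶜ`. -/
theorem likeGeometric_uniform_iff {V : Type*} [Fintype V]
    (G : SimpleGraph V) (hconn : G.Connected) (hedge : ∃ u v, G.Adj u v)
    (X : Set V) (hbip : ∀ u v, G.Adj u v → (u ∈ X ↔ v ∉ X))
    (f : V → Finset ℕ) (rv av : V → ℕ) (k : ℕ)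
    (hinj : Function.Injective f)
    (hr : ∀ v, 2 ≤ rv v) (ha : ∀ v, 0 < av v) (hcard : ∀ v, 2 ≤ (f v).card)
    (hgp : ∀ v, f v = (Finset.range (f v).card).image (fun i => av v * (rv v) ^ i))
    (hgeom : ∀ u v, G.Adj u v → IsGeomProg (f u * f v))
    (hk : 1 < k)
    (hchar : ∀ u v, G.Adj u v → u ∈ X → rv v = (rv u) ^ k) :
    (∃ c : ℕ, ∀ u v, G.Adj u v → (f u * f v).card = c) ↔
      ((∀ u ∈ X, ∀ u' ∈ X, (f u).card = (f u').card) ∧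
        (∀ v ∉ X, ∀ v' ∉ X, (f v).card = (f v').card)) := by
    classical
  -- the key cardinality formula for an edge with its X-endpoint first
  have key : ∀ u v, G.Adj u v → u ∈ X →
      (f u * f v).card = (f u).card + k * ((f v).card - 1) := by
    intro u v huv hu
    have hEq : f u * f v =
        ((Finset.range (f u).card).image (fun i => av u * (rv u) ^ i)) *
        ((Finset.range (f v).card).image (fun j => av v * ((rv u) ^ k) ^ j)) := by
      conv_lhs => rw [hgp u, hgp v, hchar u v huv hu]
    rw [hEq]
    exact card_geom_mul _ _ _ _ _ _ (ha u) (ha v) (hr u) (hcard u) (hcard v)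
      (hEq ▸ hgeom u v huv)
  constructor
  · rintro ⟨c, hc⟩
    set ψ : V → ℤ := fun w =>
      if w ∈ X then ((f w).card : ℤ) else (c : ℤ) + k - k * (f w).card with hψ
    have hadj : ∀ u v, G.Adj u v → ψ u = ψ v := by
      intro u v huv
      by_cases hu : u ∈ X
      · have hv : v ∉ X := (hbip u v huv).1 hu
        have h1 : (f u).card + k * ((f v).card - 1) = c := (key u v huv hu) ▸ hc u v huv
        have h2 : 1 ≤ (f v).card := le_trans (by norm_num) (hcard v)
        simp only [hψ, if_pos hu, if_neg hv]
        have h3 : ((f u).card : ℤ) + k * ((f v).card : ℤ) - k = c := by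
          have := congrArg (Nat.cast : ℕ → ℤ) h1
          push_cast [Nat.cast_sub h2] at this
          linarith [this]
        linarith [h3]
      · have hv : v ∈ X := by
          have := hbip u v huv; tauto
        have h1 : (f v).card + k * ((f u).card - 1) = c := by
          have := key v u huv.symm hv
          rw [mul_comm (f v) (f u)] at this
          exact this ▸ hc u v huv
        have h2 : 1 ≤ (f u).card := le_trans (by norm_num) (hcard u)
        simp only [hψ, if_pos hv, if_neg hu]
        have h3 : ((f v).card : ℤ) + k * ((f u).card : ℤ) - k = c := by
          have := congrArg (Nat.cast : ℕ → ℤ) h1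
          push_cast [Nat.cast_sub h2] at this
          linarith [this]
        linarith [h3]
    have hconst := const_of_adj hconn.preconnected hadj
    constructor
    · intro u hu u' hu'
      have := hconst u u'
      simp only [hψ, if_pos hu, if_pos hu'] at this
      exact_mod_cast this
    · intro v hv v' hv'
      have := hconst v v'
      simp only [hψ, if_neg hv, if_neg hv'] at this
      have hk0 : (k : ℤ) ≠ 0 := by positivity
      have : (k : ℤ) * (f v).card = k * (f v').card := by linarith [this]
      exact_mod_cast mul_left_cancel₀ hk0 this
  · rintro ⟨hX, hXc⟩
    obtain ⟨u0, v0, h0, hu0⟩ : ∃ u v, G.Adj u v ∧ u ∈ X := by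
      obtain ⟨u, v, h⟩ := hedge
      by_cases hu : u ∈ X
      · exact ⟨u, v, h, hu⟩
      · refine ⟨v, u, h.symm, ?_⟩
        have := hbip u v h; tauto
    have hv0 : v0 ∉ X := (hbip u0 v0 h0).1 hu0
    refine ⟨(f u0).card + k * ((f v0).card - 1), ?_⟩
    intro u v huv
    by_cases hu : u ∈ X
    · have hv : v ∉ X := (hbip u v huv).1 hu
      rw [key u v huv hu, hX u hu u0 hu0, hXc v hv v0 hv0]
    · have hv : v ∈ X := by
        have := hbip u v huv; tauto
      rw [mul_comm (f u) (f v), key v u huv.symm hv, hX v hv u0 hu0, hXc u hu v0 hv0]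
end

section
/- Let G be a finite connected bipartite simple graph with bipartition (X, Y) and at least one edge, and let f be a like-geometric product set-labeling of G with common characteristic index k such that for every edge uv with u ∈ X and v ∈ Y one has r_v = r_u^k (i.e., X is the side of smaller common ratios). Then f is a strong product set-labeling (|f(u)∗f(v)| = |f(u)|·|f(v)| for every edge uv) if and only if |f(u)| = k for every vertex u ∈ X, i.e., all vertices in the partition X have the same label size, equal to the characteristic index. -/
open Pointwise

lemma geomMono {c r : ℕ} (hc : 0 < c) (hr : 2 ≤ r) :
    StrictMono (fun e => c * r ^ e) := fun _ _ hij =>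
  (Nat.mul_lt_mul_left hc).mpr (Nat.pow_lt_pow_right hr hij)

lemma prod_eq (a b r k m n : ℕ) :
    (((Finset.range m).image fun i => a * r ^ i) * ((Finset.range n).image fun j => b * (r ^ k) ^ j))
      = ((Finset.range m ×ˢ Finset.range n).image fun p : ℕ × ℕ => p.1 + k * p.2).image
          (fun e => a * b * r ^ e) := by
  ext x
  simp only [Finset.mem_mul, Finset.mem_image, Finset.mem_range, Finset.mem_product]
  constructor
  · rintro ⟨y, ⟨i, hi, rfl⟩, z, ⟨j, hj, rfl⟩, rfl⟩
    exact ⟨i + k * j, ⟨⟨i, j⟩, ⟨hi, hj⟩, rfl⟩, by rw [pow_add, pow_mul]; ring⟩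
  · rintro ⟨e, ⟨⟨i, j⟩, ⟨hi, hj⟩, rfl⟩, rfl⟩
    exact ⟨a * r ^ i, ⟨i, hi, rfl⟩, b * (r ^ k) ^ j, ⟨j, hj, rfl⟩, by rw [pow_add, pow_mul]; ring⟩

lemma eq_k_helper (a b r k m n : ℕ) (ha : 0 < a) (hb : 0 < b) (hr : 2 ≤ r)
    (hm : 2 ≤ m) (hn : 2 ≤ n) (P : Finset ℕ)
    (hP : P = ((Finset.range m).image fun i => a * r ^ i) *
      ((Finset.range n).image fun j => b * (r ^ k) ^ j))
    (hcard : P.card = m * n) (hgeom : IsGeomProg P) : m = k := by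
  obtain ⟨a', r', ha', hr', hrep⟩ := hgeom
  rw [hcard] at hrep
  rw [prod_eq] at hP
  set c := a * b with hc
  have hc0 : 0 < c := by positivity
  have hmem1 : ∀ i j, i < m → j < n → c * r ^ (i + k * j) ∈ P := by
    intro i j hi hj
    rw [hP]
    have hm1 : (i + k * j) ∈ (Finset.range m ×ˢ Finset.range n).image
        (fun p : ℕ × ℕ => p.1 + k * p.2) :=
      Finset.mem_image.mpr ⟨⟨i, j⟩, Finset.mem_product.mpr
        ⟨Finset.mem_range.mpr hi, Finset.mem_range.mpr hj⟩, rfl⟩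
    exact Finset.mem_image_of_mem _ hm1
  have hmem1' : ∀ x ∈ P, ∃ i j, i < m ∧ j < n ∧ x = c * r ^ (i + k * j) := by
    intro x hx
    rw [hP] at hx
    simp only [Finset.mem_image, Finset.mem_product, Finset.mem_range, Prod.exists] at hx
    obtain ⟨e, ⟨i, j, ⟨hi, hj⟩, rfl⟩, rfl⟩ := hx
    exact ⟨i, j, hi, hj, rfl⟩
  have hmn : 4 ≤ m * n := le_trans (by norm_num) (Nat.mul_le_mul hm hn)
  have hmem2 : ∀ l, l < m * n → a' * r' ^ l ∈ P := by
    intro l hl; rw [hrep]; exact Finset.mem_image_of_mem _ (Finset.mem_range.mpr hl)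
  have hmem2' : ∀ x ∈ P, ∃ l, l < m * n ∧ x = a' * r' ^ l := by
    intro x hx; rw [hrep] at hx
    simp only [Finset.mem_image, Finset.mem_range] at hx
    obtain ⟨l, hl, rfl⟩ := hx; exact ⟨l, hl, rfl⟩
  -- a' = c
  have hcP : c ∈ P := by simpa using hmem1 0 0 (by omega) (by omega)
  have ha'P : a' ∈ P := by simpa using hmem2 0 (by omega)
  obtain ⟨i0, j0, hi0, hj0, he0⟩ := hmem1' a' ha'P
  obtain ⟨l0, hl0, hl0e⟩ := hmem2' c hcP
  have hkey : c = c * (r ^ (i0 + k * j0) * r' ^ l0) := by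
    calc c = a' * r' ^ l0 := hl0e
      _ = (c * r ^ (i0 + k * j0)) * r' ^ l0 := by rw [he0]
      _ = c * (r ^ (i0 + k * j0) * r' ^ l0) := by ring
  have h1 : r ^ (i0 + k * j0) * r' ^ l0 = 1 :=
    Nat.eq_of_mul_eq_mul_left hc0 (by rw [mul_one]; exact hkey.symm)
  have h2 : r ^ (i0 + k * j0) = 1 := Nat.eq_one_of_mul_eq_one_right h1
  have hca' : a' = c := by rw [he0, h2, mul_one]
  subst hca'
  -- r' = r
  have hcrP : c * r ∈ P := by simpa using hmem1 1 0 (by omega) (by omega)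
  obtain ⟨l1, hl1, hel1⟩ := hmem2' (c * r) hcrP
  have hrl1 : r = r' ^ l1 := Nat.eq_of_mul_eq_mul_left hc0 hel1
  have hcr'P : c * r' ∈ P := by simpa using hmem2 1 (by omega)
  obtain ⟨i1, j1, hi1, hj1, he1⟩ := hmem1' (c * r') hcr'P
  have hr'e : r' = r ^ (i1 + k * j1) := Nat.eq_of_mul_eq_mul_left hc0 he1
  have hre : r ^ 1 = r ^ ((i1 + k * j1) * l1) := by
    rw [pow_mul, ← hr'e, ← hrl1, pow_one]
  have h11 : 1 = (i1 + k * j1) * l1 := Nat.pow_right_injective hr hre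
  have hr'r : r' = r := by
    rw [hr'e, Nat.eq_one_of_mul_eq_one_right h11.symm, pow_one]
  rw [hr'r] at hrep hmem2 hmem2'
  -- max element comparison
  obtain ⟨m₁, rfl⟩ : ∃ m₁, m = m₁ + 1 := ⟨m - 1, by omega⟩
  obtain ⟨n₁, rfl⟩ : ∃ n₁, n = n₁ + 1 := ⟨n - 1, by omega⟩
  have hM : c * r ^ (m₁ + k * n₁) ∈ P := hmem1 m₁ n₁ (by omega) (by omega)
  have hN : c * r ^ ((m₁ + 1) * (n₁ + 1) - 1) ∈ P :=
    hmem2 _ (Nat.sub_lt (by positivity) one_pos)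
  have bound1 : ∀ x ∈ P, x ≤ c * r ^ (m₁ + k * n₁) := by
    intro x hx
    obtain ⟨i, j, hi, hj, rfl⟩ := hmem1' x hx
    apply (geomMono hc0 hr).monotone
    have : k * j ≤ k * n₁ := Nat.mul_le_mul_left k (by omega)
    omega
  have bound2 : ∀ x ∈ P, x ≤ c * r ^ ((m₁ + 1) * (n₁ + 1) - 1) := by
    intro x hx
    obtain ⟨l, hl, rfl⟩ := hmem2' x hx
    apply (geomMono hc0 hr).monotone
    omega
  have hEq : c * r ^ (m₁ + k * n₁) = c * r ^ ((m₁ + 1) * (n₁ + 1) - 1) :=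
    le_antisymm (bound2 _ hM) (bound1 _ hN)
  have hexp : m₁ + k * n₁ = (m₁ + 1) * (n₁ + 1) - 1 :=
    Nat.pow_right_injective hr (Nat.eq_of_mul_eq_mul_left hc0 hEq)
  have hprod : (m₁ + 1) * (n₁ + 1) = m₁ * n₁ + m₁ + n₁ + 1 := by ring
  have hkn : k * n₁ = (m₁ + 1) * n₁ := by
    have h3 : (m₁ + 1) * n₁ = m₁ * n₁ + n₁ := by ring
    omega
  exact (Nat.eq_of_mul_eq_mul_right (by omega) hkn).symm

lemma card_helper (a b r k n : ℕ) (ha : 0 < a) (hb : 0 < b) (hr : 2 ≤ r) (hk : 0 < k) :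
    (((Finset.range k).image fun i => a * r ^ i) *
      ((Finset.range n).image fun j => b * (r ^ k) ^ j)).card = k * n := by
  rw [prod_eq, Finset.card_image_of_injective _ (geomMono (by positivity) hr).injective,
    Finset.card_image_of_injOn, Finset.card_product, Finset.card_range, Finset.card_range]
  intro p hp q hq hpq
  simp only [Finset.mem_coe, Finset.mem_product, Finset.mem_range] at hp hq
  have hpq : p.1 + k * p.2 = q.1 + k * q.2 := hpq
  have h1 : p.1 = q.1 := by
    have := congrArg (· % k) hpq
    simpa [Nat.add_mul_mod_self_left, Nat.mod_eq_of_lt hp.1, Nat.mod_eq_of_lt hq.1] using this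
  have h2 : p.2 = q.2 := Nat.eq_of_mul_eq_mul_left hk (by omega)
  exact Prod.ext h1 h2

/-- Let `G` be a finite connected bipartite simple graph with
bipartition `(X, Xᶜ)` and at least one edge, and let `f` be a like-geometric product
set-labeling of `G` with common characteristic index `k` such that for every edge `uv`
with `u ∈ X` one has `rv v = (rv u)^k` (so `X` is the side of smaller common ratios).
Then `f` is strong (`|f u ∗ f v| = |f u|·|f v|` for every edge `uv`) iff `|f u| = k` for
every `u ∈ X`. -/
theorem likeGeometric_strong_iff {V : Type*} [Fintype V]
    (G : SimpleGraph V) (hconn : G.Connected) (hedge : ∃ u v, G.Adj u v)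
    (X : Set V) (hbip : ∀ u v, G.Adj u v → (u ∈ X ↔ v ∉ X))
    (f : V → Finset ℕ) (rv av : V → ℕ) (k : ℕ)
    (hinj : Function.Injective f)
    (hr : ∀ v, 2 ≤ rv v) (ha : ∀ v, 0 < av v) (hcard : ∀ v, 2 ≤ (f v).card)
    (hgp : ∀ v, f v = (Finset.range (f v).card).image (fun i => av v * (rv v) ^ i))
    (hgeom : ∀ u v, G.Adj u v → IsGeomProg (f u * f v))
    (hk : 1 < k)
    (hchar : ∀ u v, G.Adj u v → u ∈ X → rv v = (rv u) ^ k) :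
    (∀ u v, G.Adj u v → (f u * f v).card = (f u).card * (f v).card) ↔
      (∀ u ∈ X, (f u).card = k) := by
  have hnbr : ∀ u : V, ∃ v, G.Adj u v := by
    obtain ⟨x, y, hxy⟩ := hedge
    intro u
    obtain ⟨w⟩ := hconn.preconnected u x
    cases w with
    | nil => exact ⟨y, hxy⟩
    | cons h p => exact ⟨_, h⟩
  have hfeq : ∀ u v, G.Adj u v → u ∈ X →
      f u * f v = ((Finset.range ((f u).card)).image fun i => av u * (rv u) ^ i) *
        ((Finset.range ((f v).card)).image fun j => av v * ((rv u) ^ k) ^ j) := by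
    intro u v huv hu
    conv_lhs => rw [hgp u, hgp v]
    rw [hchar u v huv hu]
  constructor
  · intro hstrong u hu
    obtain ⟨v, huv⟩ := hnbr u
    exact eq_k_helper (av u) (av v) (rv u) k ((f u).card) ((f v).card)
      (ha u) (ha v) (hr u) (hcard u) (hcard v) (f u * f v)
      (hfeq u v huv hu) (hstrong u v huv) (hgeom u v huv)
  · intro hX u v huv
    by_cases hu : u ∈ X
    · have hm := hX u hu
      have h := card_helper (av u) (av v) (rv u) k ((f v).card) (ha u) (ha v) (hr u)
        (by omega)
      have hf2 := hfeq u v huv hu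
      rw [hm] at hf2
      rw [← hf2] at h
      rw [hm]
      exact h
    · have hv : v ∈ X := by
        have := hbip u v huv
        tauto
      have hm := hX v hv
      have h := card_helper (av v) (av u) (rv v) k ((f u).card) (ha v) (ha u) (hr v)
        (by omega)
      have hf2 := hfeq v u huv.symm hv
      rw [hm] at hf2
      rw [← hf2] at h
      rw [mul_comm (f u) (f v), hm, Nat.mul_comm ((f u).card) k]
      exact h
end

section
/- Let G be a finite connected bipartite simple graph with bipartition (X, Y) and at least one edge, and let f be a like-geometric product set-labeling of G with common characteristic index k such that for every edge uv with u ∈ X and v ∈ Y one has r_v = r_u^k (i.e., X is the side of smaller common ratios). Then f is both strong and uniform (a strongly uniform product set-labeling) if and only if |f(u)| = k for every vertex u ∈ X and the cardinality |f(v)| is constant for v ∈ Y. -/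
open Pointwise

open Pointwise Finset

private lemma psl_expInj {c r : ℕ} (hc : 0 < c) (hr : 2 ≤ r) :
    Function.Injective (fun e => c * r ^ e) := fun e e' h => by
  exact Nat.pow_right_injective hr (Nat.eq_of_mul_eq_mul_left hc h)

/-- exponent set -/
private def pslExpSet (k m n : ℕ) : Finset ℕ :=
  (Finset.range m ×ˢ Finset.range n).image (fun p => p.1 + k * p.2)

private lemma psl_prodSet_eq (a b r k m n : ℕ) :
    ((Finset.range m).image (fun i => a * r ^ i)) *
      ((Finset.range n).image (fun j => b * (r ^ k) ^ j))
    = (pslExpSet k m n).image (fun e => a * b * r ^ e) := by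
  rw [pslExpSet, Finset.image_image]
  ext x
  simp only [Finset.mem_mul, Finset.mem_image, Finset.mem_product, Finset.mem_range,
    Function.comp_apply]
  constructor
  · rintro ⟨y, ⟨i, hi, rfl⟩, z, ⟨j, hj, rfl⟩, rfl⟩
    exact ⟨(i, j), ⟨hi, hj⟩, by rw [pow_add, pow_mul]; ring⟩
  · rintro ⟨⟨i, j⟩, ⟨hi, hj⟩, rfl⟩
    exact ⟨_, ⟨i, hi, rfl⟩, _, ⟨j, hj, rfl⟩, by rw [pow_add, pow_mul]; ring⟩

private lemma psl_card_prod (a b r k m n : ℕ) (hab : 0 < a * b) (hr : 2 ≤ r) :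
    (((Finset.range m).image (fun i => a * r ^ i)) *
      ((Finset.range n).image (fun j => b * (r ^ k) ^ j))).card
    = (pslExpSet k m n).card := by
  rw [psl_prodSet_eq, Finset.card_image_of_injective _ (psl_expInj hab hr)]

private lemma psl_expSet_eq_range (k n : ℕ) (hk : 0 < k) :
    pslExpSet k k n = Finset.range (k * n) := by
  ext e
  simp only [pslExpSet, Finset.mem_image, Finset.mem_product, Finset.mem_range]
  constructor
  · rintro ⟨⟨i, j⟩, ⟨hi, hj⟩, rfl⟩
    obtain ⟨n', rfl⟩ : ∃ n', n = n' + 1 := ⟨n - 1, by omega⟩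
    have hkj : k * j ≤ k * n' := Nat.mul_le_mul_left k (by omega)
    have h2 : k * (n' + 1) = k * n' + k := by ring
    show i + k * j < k * (n' + 1)
    omega
  · intro he
    refine ⟨(e % k, e / k), ⟨Nat.mod_lt _ hk, ?_⟩, Nat.mod_add_div e k⟩
    exact Nat.div_lt_of_lt_mul (by omega)

private lemma psl_mem_expSet {k m n e : ℕ} (i j : ℕ) (hi : i < m) (hj : j < n)
    (he : e = i + k * j) : e ∈ pslExpSet k m n := by
  exact Finset.mem_image.2 ⟨(i, j), Finset.mem_product.2 ⟨Finset.mem_range.2 hi,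
    Finset.mem_range.2 hj⟩, he.symm⟩

private lemma psl_strong_m_le_k (k m n : ℕ) (hk : 0 < k) (hm : 2 ≤ m) (hn : 2 ≤ n)
    (hcard : (pslExpSet k m n).card = m * n) : m ≤ k := by
  by_contra hmk
  push_neg at hmk
  have hinj : Set.InjOn (fun p : ℕ × ℕ => p.1 + k * p.2)
      ((Finset.range m ×ˢ Finset.range n : Finset (ℕ × ℕ)) : Set (ℕ × ℕ)) := by
    apply Finset.injOn_of_card_image_eq
    rw [show ((Finset.range m ×ˢ Finset.range n).image (fun p => p.1 + k * p.2)) =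
      pslExpSet k m n from rfl, hcard, Finset.card_product, Finset.card_range,
      Finset.card_range]
  have h1 : ((k, 0) : ℕ × ℕ) ∈ (Finset.range m ×ˢ Finset.range n : Finset (ℕ × ℕ)) :=
    Finset.mem_product.2 ⟨Finset.mem_range.2 (by omega), Finset.mem_range.2 (by omega)⟩
  have h2 : ((0, 1) : ℕ × ℕ) ∈ (Finset.range m ×ˢ Finset.range n : Finset (ℕ × ℕ)) :=
    Finset.mem_product.2 ⟨Finset.mem_range.2 (by omega), Finset.mem_range.2 (by omega)⟩
  have := hinj (Finset.mem_coe.2 h1) (Finset.mem_coe.2 h2)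
    (show (k:ℕ) + k * 0 = 0 + k * 1 by ring)
  simp only [Prod.mk.injEq] at this
  omega

private lemma psl_geom_k_le_m (a b r k m n : ℕ) (hab : 0 < a * b) (hr : 2 ≤ r)
    (hm : 2 ≤ m) (hn : 2 ≤ n) (hk : 1 < k)
    (P : Finset ℕ) (hP : P = (pslExpSet k m n).image (fun e => a * b * r ^ e))
    (hg : IsGeomProg P) : k ≤ m := by
  obtain ⟨c, ρ, hc, hρ, hgp⟩ := hg
  have hN : P.card = (pslExpSet k m n).card := by
    rw [hP, Finset.card_image_of_injective _ (psl_expInj hab hr)]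
  have h0E : (0 : ℕ) ∈ pslExpSet k m n := psl_mem_expSet 0 0 (by omega) (by omega) (by omega)
  have h1E : (1 : ℕ) ∈ pslExpSet k m n := psl_mem_expSet 1 0 (by omega) (by omega) (by omega)
  have hkE : k ∈ pslExpSet k m n := psl_mem_expSet 0 1 (by omega) (by omega) (by omega)
  have hN2 : 2 ≤ P.card := by
    rw [hN]
    exact Finset.one_lt_card.2 ⟨0, h0E, 1, h1E, by omega⟩
  -- membership helpers
  have hmemP : ∀ e ∈ pslExpSet k m n, a * b * r ^ e ∈ P := fun e he => by
    rw [hP]; exact Finset.mem_image_of_mem _ he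
  have hmemP' : ∀ t < P.card, c * ρ ^ t ∈ P := fun t ht => by
    rw [hgp]; exact Finset.mem_image_of_mem _ (Finset.mem_range.2 ht)
  have hPgp : ∀ x ∈ P, ∃ t, x = c * ρ ^ t := fun x hx => by
    rw [hgp] at hx
    obtain ⟨t, _, rfl⟩ := Finset.mem_image.1 hx
    exact ⟨t, rfl⟩
  have hPexp : ∀ x ∈ P, ∃ e, x = a * b * r ^ e := fun x hx => by
    rw [hP] at hx
    obtain ⟨e, _, rfl⟩ := Finset.mem_image.1 hx
    exact ⟨e, rfl⟩
  -- c = a * b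
  have hcab : c = a * b := by
    obtain ⟨t, ht⟩ := hPgp _ (hmemP 0 h0E)
    obtain ⟨e, he⟩ := hPexp _ (hmemP' 0 (by omega))
    simp only [pow_zero, mul_one] at ht he
    have h1 : c ≤ a * b := by
      calc c = c * 1 := by ring
      _ ≤ c * ρ ^ t := Nat.mul_le_mul_left c (Nat.one_le_pow _ _ (by omega))
      _ = a * b := ht.symm
    have h2 : a * b ≤ c := by
      calc a * b = a * b * 1 := by ring
      _ ≤ a * b * r ^ e := Nat.mul_le_mul_left _ (Nat.one_le_pow _ _ (by omega))
      _ = c := he.symm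
    omega
  -- ρ = r
  have hρr : ρ = r := by
    obtain ⟨t, ht⟩ := hPgp _ (hmemP 1 h1E)
    rw [hcab] at ht
    have hrt : r = ρ ^ t := by
      have := ht
      rw [pow_one] at this
      exact Nat.eq_of_mul_eq_mul_left hab this
    obtain ⟨e, he⟩ := hPexp _ (hmemP' 1 (by omega))
    rw [hcab, pow_one] at he
    have hρe : ρ = r ^ e := Nat.eq_of_mul_eq_mul_left hab he
    have ht0 : t ≠ 0 := by
      intro h; rw [h, pow_zero] at hrt; omega
    have he0 : e ≠ 0 := by
      intro h; rw [h, pow_zero] at hρe; omega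
    have h1 : ρ ≤ r := hrt ▸ Nat.le_self_pow ht0 ρ
    have h2 : r ≤ ρ := hρe ▸ Nat.le_self_pow he0 r
    omega
  -- E = range N
  have hE : pslExpSet k m n = Finset.range P.card := by
    have himg : (pslExpSet k m n).image (fun e => a * b * r ^ e)
        = (Finset.range P.card).image (fun e => a * b * r ^ e) := by
      rw [← hP]
      conv_lhs => rw [hgp]
      rw [hcab, hρr]
    exact Finset.image_injective (psl_expInj hab hr) himg
  -- conclude
  by_contra hkm
  push_neg at hkm
  have hkN : k < P.card := Finset.mem_range.1 (hE ▸ hkE)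
  have hmE : m ∈ pslExpSet k m n := by
    rw [hE]; exact Finset.mem_range.2 (by omega)
  obtain ⟨⟨i, j⟩, hij, hval⟩ := Finset.mem_image.1 hmE
  rw [Finset.mem_product, Finset.mem_range, Finset.mem_range] at hij
  obtain ⟨hi, hj⟩ := hij
  have hval' : i + k * j = m := hval
  rcases Nat.eq_zero_or_pos j with rfl | hj1
  · omega
  · have : k ≤ k * j := Nat.le_mul_of_pos_right k hj1
    omega

/-- Let `G` be a finite connected bipartite simple graph with
bipartition `(X, Xᶜ)` and at least one edge, and let `f` be a like-geometric product
set-labeling of `G` with common characteristic index `k` such that for every edge `uv`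
with `u ∈ X` one has `rv v = (rv u)^k` (so `X` is the side of smaller common ratios).
Then `f` is both strong and uniform iff `|f u| = k` for every `u ∈ X` and the label
cardinality is constant on `Xᶜ`. -/
theorem likeGeometric_stronglyUniform_iff {V : Type*} [Fintype V]
    (G : SimpleGraph V) (hconn : G.Connected) (hedge : ∃ u v, G.Adj u v)
    (X : Set V) (hbip : ∀ u v, G.Adj u v → (u ∈ X ↔ v ∉ X))
    (f : V → Finset ℕ) (rv av : V → ℕ) (k : ℕ)
    (hinj : Function.Injective f)
    (hr : ∀ v, 2 ≤ rv v) (ha : ∀ v, 0 < av v) (hcard : ∀ v, 2 ≤ (f v).card)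
    (hgp : ∀ v, f v = (Finset.range (f v).card).image (fun i => av v * (rv v) ^ i))
    (hgeom : ∀ u v, G.Adj u v → IsGeomProg (f u * f v))
    (hk : 1 < k)
    (hchar : ∀ u v, G.Adj u v → u ∈ X → rv v = (rv u) ^ k) :
    ((∀ u v, G.Adj u v → (f u * f v).card = (f u).card * (f v).card) ∧
      (∃ c : ℕ, ∀ u v, G.Adj u v → (f u * f v).card = c)) ↔
      ((∀ u ∈ X, (f u).card = k) ∧
        (∀ v ∉ X, ∀ v' ∉ X, (f v).card = (f v').card)) := by
  -- every vertex has a neighbor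
  have hnb : ∀ u : V, ∃ w, G.Adj u w := by
    intro u
    obtain ⟨x, y, hxy⟩ := hedge
    by_cases hux : u = x
    · exact ⟨y, hux ▸ hxy⟩
    · obtain ⟨p⟩ := hconn u x
      cases p with
      | nil => exact absurd rfl hux
      | cons h q => exact ⟨_, h⟩
  -- product card as exponent-set card, for an edge with u ∈ X
  have hprodrep : ∀ u v, G.Adj u v → u ∈ X →
      f u * f v = (pslExpSet k (f u).card (f v).card).image
        (fun e => av u * av v * (rv u) ^ e) := by
    intro u v huv hu
    conv_lhs => rw [hgp u, hgp v, hchar u v huv hu]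
    exact psl_prodSet_eq _ _ _ _ _ _
  have hprodcard : ∀ u v, G.Adj u v → u ∈ X →
      (f u * f v).card = (pslExpSet k (f u).card (f v).card).card := by
    intro u v huv hu
    rw [hprodrep u v huv hu, Finset.card_image_of_injective _
      (psl_expInj (Nat.mul_pos (ha u) (ha v)) (hr u))]
  constructor
  · rintro ⟨hstrong, c, hunif⟩
    have hXk : ∀ u ∈ X, (f u).card = k := by
      intro u hu
      obtain ⟨w, hw⟩ := hnb u
      have hcE : (pslExpSet k (f u).card (f w).card).card = (f u).card * (f w).card := by
        rw [← hprodcard u w hw hu]; exact hstrong u w hw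
      have h1 : (f u).card ≤ k :=
        psl_strong_m_le_k k _ _ (by omega) (hcard u) (hcard w) hcE
      have h2 : k ≤ (f u).card :=
        psl_geom_k_le_m (av u) (av w) (rv u) k (f u).card (f w).card
          (Nat.mul_pos (ha u) (ha w)) (hr u) (hcard u) (hcard w) hk
          (f u * f w) (hprodrep u w hw hu) (hgeom u w hw)
      omega
    refine ⟨hXk, ?_⟩
    intro v hv v' hv'
    obtain ⟨u, hu⟩ := hnb v
    obtain ⟨u', hu'⟩ := hnb v'
    have huX : u ∈ X := by
      have := hbip v u hu
      by_contra h
      exact hv (this.2 h)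
    have huX' : u' ∈ X := by
      have := hbip v' u' hu'
      by_contra h
      exact hv' (this.2 h)
    have e1 : (f u * f v).card = k * (f v).card := by
      rw [hstrong u v hu.symm, hXk u huX]
    have e2 : (f u' * f v').card = k * (f v').card := by
      rw [hstrong u' v' hu'.symm, hXk u' huX']
    have := (hunif u v hu.symm).trans (hunif u' v' hu'.symm).symm
    rw [e1, e2] at this
    exact Nat.eq_of_mul_eq_mul_left (by omega) this
  · rintro ⟨hXk, hconst⟩
    -- a fixed vertex outside X
    obtain ⟨x0, y0, h0⟩ := hedge
    obtain ⟨w0, hw0⟩ : ∃ w, w ∉ X := by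
      by_cases hx : x0 ∈ X
      · exact ⟨y0, (hbip x0 y0 h0).1 hx⟩
      · exact ⟨x0, hx⟩
    have key : ∀ u v, G.Adj u v → u ∈ X →
        (f u * f v).card = (f u).card * (f v).card ∧
        (f u * f v).card = k * (f w0).card := by
      intro u v huv hu
      have hv : v ∉ X := (hbip u v huv).1 hu
      have hm : (f u).card = k := hXk u hu
      have hc : (f u * f v).card = k * (f v).card := by
        rw [hprodcard u v huv hu, hm, psl_expSet_eq_range k _ (by omega),
          Finset.card_range]
      exact ⟨by rw [hc, hm], by rw [hc, hconst v hv w0 hw0]⟩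
    have hsides : ∀ u v, G.Adj u v → u ∈ X ∨ v ∈ X := by
      intro u v huv
      by_cases hu : u ∈ X
      · exact Or.inl hu
      · exact Or.inr (by by_contra h; exact hu ((hbip u v huv).2 h))
    constructor
    · intro u v huv
      rcases hsides u v huv with hu | hv
      · exact (key u v huv hu).1
      · rw [mul_comm (f u) (f v), Nat.mul_comm]
        exact (key v u huv.symm hv).1
    · refine ⟨k * (f w0).card, fun u v huv => ?_⟩
      rcases hsides u v huv with hu | hv
      · exact (key u v huv hu).2
      · rw [mul_comm (f u) (f v)]
        exact (key v u huv.symm hv).2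
end

section
/- Let a, b, r, k, m, n be positive integers with r ≥ 2, m ≥ 2, n ≥ 2 and k > m, and set A = {a·r^i : 0 ≤ i < m} and B = {b·(r^k)^j : 0 ≤ j < n}. Then the product set A∗B is not a geometric progression. -/
open Pointwise

/-- For positive integers `a, b, r, k, m, n` with `r ≥ 2`, `m, n ≥ 2`
and `k > m`, setting `A = {a·r^i : 0 ≤ i < m}` and `B = {b·(r^k)^j : 0 ≤ j < n}`, the
product set `A ∗ B` is not a geometric progression. -/
theorem productSet_not_geomProg_of_large_index (a b r k m n : ℕ)
    (ha : 0 < a) (hb : 0 < b) (hr : 2 ≤ r) (hm : 2 ≤ m) (hn : 2 ≤ n) (hk : m < k) :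
    ¬ IsGeomProg (((Finset.range m).image (fun i => a * r ^ i)) *
        ((Finset.range n).image (fun j => b * (r ^ k) ^ j))) := by
  set S : Finset ℕ := (((Finset.range m).image (fun i => a * r ^ i)) *
        ((Finset.range n).image (fun j => b * (r ^ k) ^ j))) with hS
  have hab : 0 < a * b := Nat.mul_pos ha hb
  have hpowinj : Function.Injective (r ^ ·) := Nat.pow_right_injective hr
  have hmem : ∀ x, x ∈ S ↔ ∃ i, i < m ∧ ∃ j, j < n ∧ x = a * b * r ^ (i + k * j) := by
    intro x
    simp only [hS, Finset.mem_mul, Finset.mem_image, Finset.mem_range]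
    constructor
    · rintro ⟨y, ⟨i, hi, rfl⟩, z, ⟨j, hj, rfl⟩, rfl⟩
      exact ⟨i, hi, j, hj, by rw [← pow_mul, pow_add]; ring⟩
    · rintro ⟨i, hi, j, hj, rfl⟩
      exact ⟨a * r ^ i, ⟨i, hi, rfl⟩, b * (r ^ k) ^ j, ⟨j, hj, rfl⟩,
        by rw [← pow_mul, pow_add]; ring⟩
  -- cancel `a*b` and exponents
  have hcanc : ∀ e e' : ℕ, a * b * r ^ e = a * b * r ^ e' → e = e' := by
    intro e e' h
    exact hpowinj (Nat.eq_of_mul_eq_mul_left hab h)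
  have hcard : S.card = m * n := by
    have hSeq : S = ((Finset.range m) ×ˢ (Finset.range n)).image
        (fun p : ℕ × ℕ => a * b * r ^ (p.1 + k * p.2)) := by
      ext x
      rw [hmem]
      simp only [Finset.mem_image, Finset.mem_product, Finset.mem_range]
      constructor
      · rintro ⟨i, hi, j, hj, rfl⟩; exact ⟨(i, j), ⟨hi, hj⟩, rfl⟩
      · rintro ⟨⟨i, j⟩, ⟨hi, hj⟩, rfl⟩; exact ⟨i, hi, j, hj, rfl⟩
    rw [hSeq, Finset.card_image_of_injOn, Finset.card_product,
      Finset.card_range, Finset.card_range]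
    rintro ⟨i, j⟩ hp ⟨i', j'⟩ hq h
    simp only [Finset.mem_coe, Finset.mem_product, Finset.mem_range] at hp hq
    have he : i + k * j = i' + k * j' := hcanc _ _ h
    have hik : i < k := lt_trans hp.1 hk
    have hik' : i' < k := lt_trans hq.1 hk
    have hj : j = j' := by
      have h1 : (i + k * j) / k = j := by
        rw [Nat.add_mul_div_left _ _ (by omega : 0 < k), Nat.div_eq_of_lt hik]; omega
      have h2 : (i' + k * j') / k = j' := by
        rw [Nat.add_mul_div_left _ _ (by omega : 0 < k), Nat.div_eq_of_lt hik']; omega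
      rw [← h1, ← h2, he]
    subst hj
    have : i = i' := by omega
    simp [this]
  rintro ⟨c, s, hc, hs, hEq⟩
  rw [hcard] at hEq
  have hG : ∀ x, x ∈ S ↔ ∃ t, t < m * n ∧ x = c * s ^ t := by
    intro x
    rw [hEq]
    simp only [Finset.mem_image, Finset.mem_range]
    constructor
    · rintro ⟨t, ht, rfl⟩; exact ⟨t, ht, rfl⟩
    · rintro ⟨t, ht, rfl⟩; exact ⟨t, ht, rfl⟩
  have hmn1 : 1 < m * n := by nlinarith
  have hmmn : m < m * n := by nlinarith
  -- c = a * b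
  have hab_mem : a * b ∈ S := (hmem _).2 ⟨0, by omega, 0, by omega, by simp⟩
  have hc_mem : c ∈ S := (hG _).2 ⟨0, by omega, by simp⟩
  obtain ⟨t0, _, ht0⟩ := (hG _).1 hab_mem
  obtain ⟨e0, _, e0', _, he0⟩ := (hmem _).1 hc_mem
  have hcab : c = a * b := by
    rw [he0] at ht0
    rw [mul_assoc] at ht0
    have h1 : r ^ (e0 + k * e0') * s ^ t0 = 1 :=
      (Nat.eq_of_mul_eq_mul_left hab (by rw [mul_one]; exact ht0)).symm
    have hre : r ^ (e0 + k * e0') = 1 := Nat.eq_one_of_mul_eq_one_right h1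
    rw [he0, hre, mul_one]
  subst hcab
  -- s = r
  have habr_mem : a * b * r ∈ S := (hmem _).2 ⟨1, by omega, 0, by omega, by simp⟩
  obtain ⟨t1, _, ht1⟩ := (hG _).1 habr_mem
  have habs_mem : a * b * s ∈ S := (hG _).2 ⟨1, hmn1, by ring⟩
  obtain ⟨e1, _, e1', _, he1⟩ := (hmem _).1 habs_mem
  have hsr : s = r ^ (e1 + k * e1') := Nat.eq_of_mul_eq_mul_left hab he1
  have hrs : r = s ^ t1 := Nat.eq_of_mul_eq_mul_left hab ht1
  have hexp : (e1 + k * e1') * t1 = 1 := by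
    have : r ^ 1 = r ^ ((e1 + k * e1') * t1) := by
      rw [pow_one, pow_mul, ← hsr, ← hrs]
    exact (hpowinj this).symm
  have hsr' : s = r := by
    have h1 : e1 + k * e1' = 1 := Nat.eq_one_of_mul_eq_one_right hexp
    rw [hsr, h1, pow_one]
  rw [hsr'] at hG
  -- contradiction with exponent m
  have hrm_mem : a * b * r ^ m ∈ S := (hG _).2 ⟨m, hmmn, rfl⟩
  obtain ⟨i, hi, j, hj, hij⟩ := (hmem _).1 hrm_mem
  have hme : m = i + k * j := hcanc _ _ hij
  rcases Nat.eq_zero_or_pos j with hj0 | hj0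
  · rw [hj0, Nat.mul_zero] at hme; omega
  · have : k ≤ k * j := Nat.le_mul_of_pos_right k hj0
    omega
end

section
/- Let a, b, r, s, m, n be positive integers with r ≥ 2, s ≥ 2, r < s, m ≥ 2, n ≥ 2, and suppose s is not equal to r^k for any positive integer k. Set A = {a·r^i : 0 ≤ i < m} and B = {b·s^j : 0 ≤ j < n}. Then the product set A∗B is not a geometric progression. -/
open Pointwise

/-- For positive integers `a, b, r, s, m, n` with `r, s ≥ 2`, `r < s`,
`m, n ≥ 2`, if `s` is not a positive integral power of `r`, then for
`A = {a·r^i : 0 ≤ i < m}` and `B = {b·s^j : 0 ≤ j < n}` the product set `A ∗ B` is not a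
geometric progression. -/
theorem productSet_not_geomProg_of_not_power (a b r s m n : ℕ)
    (ha : 0 < a) (hb : 0 < b) (hr : 2 ≤ r) (hs : 2 ≤ s) (hrs : r < s)
    (hm : 2 ≤ m) (hn : 2 ≤ n)
    (hnp : ∀ k : ℕ, 0 < k → s ≠ r ^ k) :
    ¬ IsGeomProg (((Finset.range m).image (fun i => a * r ^ i)) *
        ((Finset.range n).image (fun j => b * s ^ j))) := by
  set C := ((Finset.range m).image (fun i => a * r ^ i)) *
        ((Finset.range n).image (fun j => b * s ^ j)) with hCdef
  rintro ⟨c, t, hc, ht, hC⟩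
  have hab0 : 0 < a * b := Nat.mul_pos ha hb
  -- membership characterizations
  have hmem : ∀ x ∈ C, ∃ i, i < m ∧ ∃ j, j < n ∧ x = a * b * (r ^ i * s ^ j) := by
    intro x hx
    rw [hCdef, Finset.mem_mul] at hx
    obtain ⟨y, hy, z, hz, hyz⟩ := hx
    simp only [Finset.mem_image, Finset.mem_range] at hy hz
    obtain ⟨i, hi, rfl⟩ := hy
    obtain ⟨j, hj, rfl⟩ := hz
    exact ⟨i, hi, j, hj, by rw [← hyz]; ring⟩
  have hmem' : ∀ i, i < m → ∀ j, j < n → a * b * (r ^ i * s ^ j) ∈ C := by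
    intro i hi j hj
    have : (a * r ^ i) * (b * s ^ j) ∈ C :=
      Finset.mul_mem_mul (Finset.mem_image.mpr ⟨i, Finset.mem_range.mpr hi, rfl⟩)
        (Finset.mem_image.mpr ⟨j, Finset.mem_range.mpr hj, rfl⟩)
    have he : (a * r ^ i) * (b * s ^ j) = a * b * (r ^ i * s ^ j) := by ring
    rwa [he] at this
  have hab : a * b ∈ C := by
    have := hmem' 0 (by omega) 0 (by omega); simpa using this
  have habr : a * b * r ∈ C := by
    have := hmem' 1 (by omega) 0 (by omega); simpa using this
  have habs : a * b * s ∈ C := by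
    have := hmem' 0 (by omega) 1 (by omega); simpa using this
  have hgmem : ∀ x ∈ C, ∃ i, x = c * t ^ i := by
    intro x hx
    rw [hC] at hx
    simp only [Finset.mem_image, Finset.mem_range] at hx
    obtain ⟨i, _, rfl⟩ := hx
    exact ⟨i, rfl⟩
  have hgmem' : ∀ i, i < C.card → c * t ^ i ∈ C := by
    intro i hi
    rw [hC]
    exact Finset.mem_image.mpr ⟨i, Finset.mem_range.mpr hi, rfl⟩
  -- a*b is the minimum of C
  have hmin : ∀ x ∈ C, a * b ≤ x := by
    intro x hx
    obtain ⟨i, _, j, _, rfl⟩ := hmem x hx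
    have h1 : 1 ≤ r ^ i * s ^ j :=
      Nat.one_le_iff_ne_zero.mpr (Nat.mul_ne_zero (pow_ne_zero _ (by omega)) (pow_ne_zero _ (by omega)))
    calc a * b = a * b * 1 := by ring
      _ ≤ a * b * (r ^ i * s ^ j) := Nat.mul_le_mul_left _ h1
  -- hence c = a * b
  have hcard1 : 0 < C.card := Finset.card_pos.mpr ⟨_, hab⟩
  have hcC : c ∈ C := by simpa using hgmem' 0 hcard1
  obtain ⟨i0, hi0⟩ := hgmem (a * b) hab
  have hc_le : c ≤ a * b := by
    rw [hi0]
    exact Nat.le_mul_of_pos_right _ (Nat.pow_pos (by omega))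
  have hceq : c = a * b := le_antisymm hc_le (hmin c hcC)
  subst hceq
  -- card ≥ 2
  have hcard2 : 1 < C.card := by
    refine Finset.one_lt_card.mpr ⟨_, hab, _, habr, ?_⟩
    have : a * b * 1 < a * b * r := by nlinarith
    omega
  -- the second GP element gives t = r^i * s^j for some i, j, so t ≥ r
  have habt : a * b * t ∈ C := by simpa using hgmem' 1 hcard2
  obtain ⟨i1, _, j1, _, ht1⟩ := hmem _ habt
  have ht1' : t = r ^ i1 * s ^ j1 := Nat.eq_of_mul_eq_mul_left hab0 ht1
  have htr : r ≤ t := by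
    rcases Nat.eq_zero_or_pos i1 with hi | hi
    · subst hi
      rcases Nat.eq_zero_or_pos j1 with hj | hj
      · subst hj; simp at ht1'; omega
      · have : s ≤ s ^ j1 := Nat.le_self_pow (by omega) s
        simp only [pow_zero, one_mul] at ht1'
        omega
    · have h1 : r ≤ r ^ i1 := Nat.le_self_pow (by omega) r
      have h2 : 1 ≤ s ^ j1 := Nat.one_le_iff_ne_zero.mpr (pow_ne_zero _ (by omega))
      calc r ≤ r ^ i1 := h1
        _ = r ^ i1 * 1 := by ring
        _ ≤ r ^ i1 * s ^ j1 := Nat.mul_le_mul_left _ h2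
        _ = t := ht1'.symm
  -- a*b*r in the GP gives r = t^k, so t ≤ r, hence t = r
  obtain ⟨k, hk⟩ := hgmem _ habr
  have hk' : r = t ^ k := Nat.eq_of_mul_eq_mul_left hab0 hk
  have hkpos : 0 < k := by
    rcases Nat.eq_zero_or_pos k with h | h
    · subst h; simp at hk'; omega
    · exact h
  have hrt : t ≤ r := hk' ▸ Nat.le_self_pow (by omega) t
  have hteq : t = r := le_antisymm hrt htr
  subst hteq
  -- finally a*b*s in the GP gives s = t^l, contradiction
  obtain ⟨l, hl⟩ := hgmem _ habs
  have hl' : s = t ^ l := Nat.eq_of_mul_eq_mul_left hab0 hl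
  have hlpos : 0 < l := by
    rcases Nat.eq_zero_or_pos l with h | h
    · subst h; simp at hl'; omega
    · exact h
  exact hnp l hlpos hl'
end
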